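/- arXiv:0801.0072 — 4 statements merged into one kernel-verified Lean document; each statement's English description precedes it below -/
import Mathlib

section
/- Let U(n,k) be the number of permutations of {1,…,n} with up-down index k. Then for all integers n > t ≥ 1, U(n, 2^{t-1}) = C(n,t) − 1, where C(n,t) is the binomial coefficient. -/
open Finset

/-- The up-down index of a permutation of `Fin n`: bit `n-2-i` is 1 iff position `i` is an ascent. -/
def updownIndex (n : ℕ) (π : Equiv.Perm (Fin n)) : ℕ :=
  ∑ i : Fin (n - 1),
    if π ⟨i.val + 1, by have := i.isLt; omega⟩ > π ⟨i.val, by have := i.isLt; omega⟩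
    then 2 ^ (n - 2 - i.val) else 0

/-- The number of permutations of `{1, ..., n}` with up-down index `k`. -/
def U (n k : ℕ) : ℕ :=
  (Finset.univ.filter (fun π : Equiv.Perm (Fin n) => updownIndex n π = k)).card

section Aux
variable {n : ℕ}

lemma compl_card_eq {b : ℕ} (s : Finset (Fin n)) (hs : s.card = b) (hb : b ≤ n) :
    (sᶜ).card = n - b := by
  rw [Finset.card_compl, hs]; simp

def blockPerm (b : ℕ) (hb : b ≤ n) (s : Finset (Fin n)) (hs : s.card = b) : Equiv.Perm (Fin n) :=
  ((finCongr (by omega : n = b + (n - b))).trans finSumFinEquiv.symm).trans <|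
    ((Fin.revPerm.sumCongr Fin.revPerm).trans <|
      ((s.orderIsoOfFin hs).toEquiv.sumCongr ((sᶜ).orderIsoOfFin (compl_card_eq s hs hb)).toEquiv).trans <|
        ((Equiv.subtypeEquivRight (fun x => by simp)).sumCongr
            (Equiv.subtypeEquivRight (fun x => by simp))).trans
          (Equiv.Set.sumCompl (↑s : Set (Fin n))))

lemma blockPerm_apply_lt {b : ℕ} (hb : b ≤ n) (s : Finset (Fin n)) (hs : s.card = b)
    (i : Fin n) (hi : i.val < b) :
    blockPerm b hb s hs i = s.orderEmbOfFin hs ⟨b - 1 - i.val, by omega⟩ := by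
  unfold blockPerm
  simp only [Equiv.trans_apply, finCongr_apply]
  have h1 : (Fin.cast (by omega : n = b + (n - b)) i) = Fin.castAdd (n - b) ⟨i.val, hi⟩ := rfl
  rw [h1, finSumFinEquiv_symm_apply_castAdd]
  simp only [Equiv.sumCongr_apply, Sum.map_inl, Fin.revPerm_apply]
  have h2 : (⟨i.val, hi⟩ : Fin b).rev = ⟨b - 1 - i.val, by omega⟩ := by
    simp only [Fin.ext_iff, Fin.val_rev]; omega
  rw [h2]
  rw [Equiv.Set.sumCompl_apply_inl]
  simp [Equiv.subtypeEquivRight, Finset.coe_orderIsoOfFin_apply]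
  rfl

lemma blockPerm_apply_ge {b : ℕ} (hb : b ≤ n) (s : Finset (Fin n)) (hs : s.card = b)
    (i : Fin n) (hi : b ≤ i.val) :
    blockPerm b hb s hs i = (sᶜ).orderEmbOfFin (compl_card_eq s hs hb)
      ⟨n - 1 - i.val, by have := i.isLt; omega⟩ := by
  have hin := i.isLt
  unfold blockPerm
  simp only [Equiv.trans_apply, finCongr_apply]
  have h1 : (Fin.cast (by omega : n = b + (n - b)) i) = Fin.natAdd b ⟨i.val - b, by omega⟩ := by
    simp only [Fin.ext_iff, Fin.coe_cast, Fin.coe_natAdd]; omega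
  rw [h1, finSumFinEquiv_symm_apply_natAdd]
  simp only [Equiv.sumCongr_apply, Sum.map_inr, Fin.revPerm_apply]
  have h2 : (⟨i.val - b, by omega⟩ : Fin (n - b)).rev = ⟨n - 1 - i.val, by omega⟩ := by
    simp only [Fin.ext_iff, Fin.val_rev]; omega
  rw [h2]
  rw [Equiv.Set.sumCompl_apply_inr]
  simp [Equiv.subtypeEquivRight, Finset.coe_orderIsoOfFin_apply]
  rfl

lemma desc_chain (π : Equiv.Perm (Fin n)) (lo hi : ℕ) (hhi : hi < n)
    (hdesc : ∀ p (hp1 : lo ≤ p) (hp2 : p + 1 ≤ hi), π ⟨p + 1, by omega⟩ < π ⟨p, by omega⟩)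
    (p q : ℕ) (hp : lo ≤ p) (hq : q ≤ hi) (hpq : p < q) :
    π ⟨q, by omega⟩ < π ⟨p, by omega⟩ := by
  induction q with
  | zero => omega
  | succ m ih =>
    rcases Nat.lt_or_ge p m with h | h
    · exact lt_trans (hdesc m (by omega) (by omega)) (ih (by omega) h)
    · have hpm : p = m := by omega
      subst hpm; exact hdesc p hp hq

lemma card_filter_lt (k : ℕ) (hk : k ≤ n) :
    (univ.filter (fun j : Fin n => j.val < k)).card = k := by
  have h : univ.filter (fun j : Fin n => j.val < k)
      = (univ : Finset (Fin k)).map (Fin.castLEEmb hk) := by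
    ext j
    simp only [mem_filter, mem_univ, true_and]
    constructor
    · intro hj
      refine Finset.mem_map.mpr ⟨⟨j.val, hj⟩, mem_univ _, ?_⟩
      simp [Fin.castLEEmb, Fin.ext_iff]
    · intro hj
      obtain ⟨i, -, rfl⟩ := Finset.mem_map.mp hj
      simpa [Fin.castLEEmb] using i.isLt
  rw [h, Finset.card_map, Finset.card_univ, Fintype.card_fin]

def badSet (n b : ℕ) : Finset (Fin n) := univ.filter (fun j : Fin n => n - b ≤ j.val)

lemma badSet_card (b : ℕ) (hb : b ≤ n) : (badSet n b).card = b := by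
  have h1 : badSet n b = (univ.filter (fun j : Fin n => j.val < n - b))ᶜ := by
    ext j; simp [badSet, Nat.not_lt]
  rw [h1, Finset.card_compl, card_filter_lt (n - b) (by omega), Fintype.card_fin]
  omega

lemma minmax_iff (b : ℕ) (hb1 : 1 ≤ b) (hbn : b < n) (s : Finset (Fin n)) (hs : s.card = b)
    (hcc : (sᶜ).card = n - b) :
    s.orderEmbOfFin hs ⟨0, by omega⟩ < (sᶜ).orderEmbOfFin hcc ⟨n - b - 1, by omega⟩
      ↔ s ≠ badSet n b := by
  have hspos : s.Nonempty := Finset.card_pos.mp (by omega)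
  have hcpos : (sᶜ).Nonempty := Finset.card_pos.mp (by omega)
  have hz : s.orderEmbOfFin hs ⟨0, by omega⟩ = s.min' hspos :=
    Finset.orderEmbOfFin_zero hs (by omega)
  have hl : (sᶜ).orderEmbOfFin hcc ⟨n - b - 1, by omega⟩ = (sᶜ).max' hcpos :=
    Finset.orderEmbOfFin_last hcc (by omega)
  rw [hz, hl]
  constructor
  · intro h hbad
    have h1 : s.min' hspos ∈ s := Finset.min'_mem _ _
    have h2 : (sᶜ).max' hcpos ∈ sᶜ := Finset.max'_mem _ _
    have h1' : s.min' hspos ∈ badSet n b := by rw [← hbad]; exact h1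
    have h2' : (sᶜ).max' hcpos ∈ (badSet n b)ᶜ := by rw [← hbad]; exact h2
    simp only [badSet, Finset.mem_compl, mem_filter, mem_univ, true_and, Nat.not_le] at h1' h2'
    have h3 : (s.min' hspos).val < ((sᶜ).max' hcpos).val := h
    omega
  · intro hne
    have hx : ∃ x ∈ s, x.val < n - b := by
      by_contra hcon
      push_neg at hcon
      have hsub : s ⊆ badSet n b := by
        intro x hx
        simp only [badSet, mem_filter, mem_univ, true_and]
        exact hcon x hx
      exact hne (Finset.eq_of_subset_of_card_le hsub (by rw [hs, badSet_card b (by omega)]))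
    have hy : ∃ y ∈ sᶜ, n - b ≤ y.val := by
      by_contra hcon
      push_neg at hcon
      have hsub : sᶜ ⊆ (badSet n b)ᶜ := by
        intro y hy
        simp only [badSet, Finset.mem_compl, mem_filter, mem_univ, true_and, Nat.not_le]
        exact hcon y hy
      have hcompl : sᶜ = (badSet n b)ᶜ := Finset.eq_of_subset_of_card_le hsub (by
        rw [compl_card_eq s hs (by omega), Finset.card_compl, badSet_card b (by omega),
          Fintype.card_fin])
      exact hne (by
        have := congrArg (·ᶜ) hcompl
        simpa using this)
    obtain ⟨x, hxs, hxv⟩ := hx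
    obtain ⟨y, hys, hyv⟩ := hy
    have h1 : s.min' hspos ≤ x := Finset.min'_le _ _ hxs
    have h2 : y ≤ (sᶜ).max' hcpos := Finset.le_max' _ _ hys
    have hxy : x < y := by rw [Fin.lt_def]; omega
    exact lt_of_le_of_lt h1 (lt_of_lt_of_le hxy h2)

set_option maxHeartbeats 1000000 in
/-- ascent pattern of blockPerm -/
lemma blockPerm_pattern (b : ℕ) (hb1 : 1 ≤ b) (hbn : b < n) (s : Finset (Fin n))
    (hs : s.card = b) (hne : s ≠ badSet n b) (i : ℕ) (hi : i + 1 ≤ n - 1) :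
    (blockPerm b hbn.le s hs ⟨i + 1, by omega⟩ > blockPerm b hbn.le s hs ⟨i, by omega⟩
      ↔ i = b - 1) := by
  rcases Nat.lt_trichotomy (i + 1) b with h | h | h
  · rw [blockPerm_apply_lt hbn.le s hs ⟨i + 1, by omega⟩ (show i + 1 < b by omega),
      blockPerm_apply_lt hbn.le s hs ⟨i, by omega⟩ (show i < b by omega)]
    have hlt : (s.orderEmbOfFin hs) ⟨b - 1 - (i + 1), by omega⟩
        < (s.orderEmbOfFin hs) ⟨b - 1 - i, by omega⟩ := by
      apply (s.orderEmbOfFin hs).strictMono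
      rw [Fin.lt_def]; simp; omega
    constructor
    · intro hcon; exact absurd hcon (not_lt.mpr hlt.le)
    · intro hcon; omega
  · rw [blockPerm_apply_lt hbn.le s hs ⟨i, by omega⟩ (show i < b by omega),
      blockPerm_apply_ge hbn.le s hs ⟨i + 1, by omega⟩ (show b ≤ i + 1 by omega)]
    have e1 : (⟨b - 1 - i, by omega⟩ : Fin b) = ⟨0, by omega⟩ := by
      simp only [Fin.mk.injEq]; omega
    have e2 : (⟨n - 1 - (i + 1), by omega⟩ : Fin (n - b)) = ⟨n - b - 1, by omega⟩ := by
      simp only [Fin.mk.injEq]; omega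
    rw [e1, e2]
    rw [gt_iff_lt, minmax_iff b hb1 hbn s hs (compl_card_eq s hs hbn.le)]
    simp [hne]
    omega
  · rw [blockPerm_apply_ge hbn.le s hs ⟨i + 1, by omega⟩ (show b ≤ i + 1 by omega),
      blockPerm_apply_ge hbn.le s hs ⟨i, by omega⟩ (show b ≤ i by omega)]
    have hlt : ((sᶜ).orderEmbOfFin (compl_card_eq s hs hbn.le)) ⟨n - 1 - (i + 1), by omega⟩
        < ((sᶜ).orderEmbOfFin (compl_card_eq s hs hbn.le)) ⟨n - 1 - i, by omega⟩ := by
      apply OrderEmbedding.strictMono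
      rw [Fin.lt_def]; simp; omega
    constructor
    · intro hcon; exact absurd hcon (not_lt.mpr hlt.le)
    · intro hcon; omega

/-- the value-set of the first block -/
lemma blockPerm_filter (b : ℕ) (hb : b ≤ n) (s : Finset (Fin n)) (hs : s.card = b) :
    univ.filter (fun j : Fin n => ((blockPerm b hb s hs).symm j).val < b) = s := by
  ext j
  simp only [mem_filter, mem_univ, true_and]
  constructor
  · intro h
    have h1 := blockPerm_apply_lt hb s hs ((blockPerm b hb s hs).symm j) h
    rw [Equiv.apply_symm_apply] at h1
    rw [h1]
    exact Finset.orderEmbOfFin_mem _ _ _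
  · intro hjs
    by_contra hcon
    push_neg at hcon
    have h1 := blockPerm_apply_ge hb s hs ((blockPerm b hb s hs).symm j) hcon
    rw [Equiv.apply_symm_apply] at h1
    have h2 : j ∈ sᶜ := h1 ▸ Finset.orderEmbOfFin_mem _ _ _
    rw [Finset.mem_compl] at h2
    exact h2 hjs

lemma sOf_card (b : ℕ) (hb : b ≤ n) (π : Equiv.Perm (Fin n)) :
    (univ.filter (fun j : Fin n => (π.symm j).val < b)).card = b := by
  have h : univ.filter (fun j : Fin n => (π.symm j).val < b)
      = (univ.filter (fun i : Fin n => i.val < b)).image π := by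
    ext j
    simp only [mem_filter, mem_univ, true_and, Finset.mem_image]
    constructor
    · intro h
      exact ⟨π.symm j, h, π.apply_symm_apply j⟩
    · rintro ⟨i, hi, rfl⟩
      rw [π.symm_apply_apply]
      exact hi
  rw [h, Finset.card_image_of_injective _ π.injective, card_filter_lt b hb]

/-- uniqueness: a permutation with the single-ascent pattern is a blockPerm -/
lemma eq_blockPerm (b : ℕ) (hb1 : 1 ≤ b) (hbn : b < n) (π : Equiv.Perm (Fin n))
    (hpat : ∀ (i : ℕ) (h : i + 1 ≤ n - 1), (π ⟨i + 1, by omega⟩ > π ⟨i, by omega⟩ ↔ i = b - 1)) :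
    blockPerm b hbn.le (univ.filter (fun j : Fin n => (π.symm j).val < b))
      (sOf_card b hbn.le π) = π := by
  have hn : 1 ≤ n := by omega
  set s := univ.filter (fun j : Fin n => (π.symm j).val < b) with hsdef
  have hs : s.card = b := sOf_card b hbn.le π
  -- descents
  have hdesc : ∀ p (hp : p + 1 ≤ n - 1) (hpb : p ≠ b - 1),
      π ⟨p + 1, by omega⟩ < π ⟨p, by omega⟩ := by
    intro p hp hpb
    have h1 : ¬ (π ⟨p + 1, by omega⟩ > π ⟨p, by omega⟩) := by
      rw [hpat p hp]; exact hpb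
    have h2 : π ⟨p + 1, by omega⟩ ≠ π ⟨p, by omega⟩ := by
      intro hc
      have := π.injective hc
      rw [Fin.mk.injEq] at this
      omega
    exact lt_of_le_of_ne (not_lt.mp h1) h2
  apply Equiv.ext
  intro i
  rcases Nat.lt_or_ge i.val b with hib | hib
  · rw [blockPerm_apply_lt hbn.le s hs i hib]
    set f : Fin b → Fin n := fun j => π ⟨b - 1 - j.val, by have := j.isLt; omega⟩ with hf
    have hmem : ∀ j, f j ∈ s := by
      intro j
      simp only [hf, hsdef, mem_filter, mem_univ, true_and, Equiv.symm_apply_apply]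
      have := j.isLt; omega
    have hmono : StrictMono f := by
      intro j1 j2 hj
      have hj1 := j1.isLt; have hj2 := j2.isLt
      exact desc_chain π 0 (b - 1) (by omega)
        (fun p hp1 hp2 => hdesc p (by omega) (by omega))
        (b - 1 - j2.val) (b - 1 - j1.val) (by omega) (by omega) (by omega)
    have huniq : f = s.orderEmbOfFin hs := Finset.orderEmbOfFin_unique hs hmem hmono
    rw [← huniq]
    show π _ = π i
    congr 1
    rw [Fin.ext_iff]
    simp
    omega
  · rw [blockPerm_apply_ge hbn.le s hs i hib]
    have hin := i.isLt
    set g : Fin (n - b) → Fin n := fun j => π ⟨n - 1 - j.val, by have := j.isLt; omega⟩ with hg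
    have hmem : ∀ j, g j ∈ sᶜ := by
      intro j
      have hjlt := j.isLt
      simp only [hg, hsdef, Finset.mem_compl, mem_filter, mem_univ, true_and,
        Equiv.symm_apply_apply, not_lt]
      omega
    have hmono : StrictMono g := by
      intro j1 j2 hj
      have hj1 := j1.isLt; have hj2 := j2.isLt
      exact desc_chain π b (n - 1) (by omega)
        (fun p hp1 hp2 => hdesc p (by omega) (by omega))
        (n - 1 - j2.val) (n - 1 - j1.val) (by omega) (by omega) (by omega)
    have huniq : g = (sᶜ).orderEmbOfFin (compl_card_eq s hs hbn.le) :=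
      Finset.orderEmbOfFin_unique _ hmem hmono
    rw [← huniq]
    show π _ = π i
    congr 1
    rw [Fin.ext_iff]
    simp
    omega


lemma twoPowSum_inj : Function.Injective (fun s : Finset ℕ => ∑ i ∈ s, 2 ^ i) := by
  intro s u h
  have := congrArg (fun m : ℕ => m.bitIndices.toFinset) h
  simpa using this

lemma updown_eq_iff (n t : ℕ) (ht : 1 ≤ t) (htn : t < n) (π : Equiv.Perm (Fin n)) :
    updownIndex n π = 2 ^ (t - 1) ↔
      ∀ i : Fin (n - 1), ((π ⟨i.val + 1, by omega⟩ > π ⟨i.val, by omega⟩) ↔ i.val = n - 1 - t) := by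
  classical
  set g : Fin (n - 1) → ℕ := fun i => n - 2 - i.val with hg
  have hginj : Function.Injective g := by
    intro i j hij
    have hi := i.isLt; have hj := j.isLt
    ext; simp only [hg] at hij; omega
  set A : Finset (Fin (n - 1)) :=
    univ.filter (fun i : Fin (n - 1) =>
      π ⟨i.val + 1, by omega⟩ > π ⟨i.val, by omega⟩) with hA
  have h1 : updownIndex n π = ∑ j ∈ A.image g, 2 ^ j := by
    rw [Finset.sum_image (fun a _ b _ h => hginj h)]
    rw [hA, Finset.sum_filter]
    rfl
  have hc : (n - 1 - t) < n - 1 := by omega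
  have h2 : updownIndex n π = 2 ^ (t - 1) ↔ A.image g = {t - 1} := by
    rw [h1]
    constructor
    · intro h
      have : ∑ j ∈ A.image g, 2 ^ j = ∑ j ∈ ({t - 1} : Finset ℕ), 2 ^ j := by simpa using h
      exact twoPowSum_inj this
    · intro h; rw [h]; simp
  rw [h2]
  have h3 : ({t - 1} : Finset ℕ) = Finset.image g {⟨n - 1 - t, hc⟩} := by
    simp [hg]; omega
  rw [h3]
  rw [Finset.image_injective hginj |>.eq_iff]
  rw [Finset.ext_iff]
  constructor
  · intro h i
    have := h i
    simp only [hA, mem_filter, mem_univ, true_and, mem_singleton] at this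
    rw [this, Fin.ext_iff]
  · intro h i
    simp only [hA, mem_filter, mem_univ, true_and, mem_singleton]
    rw [h i, Fin.ext_iff]

end Aux

theorem U_single_ascent (n t : ℕ) (ht : 1 ≤ t) (htn : t < n) :
    U n (2 ^ (t - 1)) = Nat.choose n t - 1 := by
  classical
  set b := n - t with hbdef
  have hb1 : 1 ≤ b := by omega
  have hbn : b < n := by omega
  have hfilter : univ.filter (fun π : Equiv.Perm (Fin n) => updownIndex n π = 2 ^ (t - 1))
      = univ.filter (fun π : Equiv.Perm (Fin n) =>
          ∀ (i : ℕ) (h : i + 1 ≤ n - 1),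
            (π ⟨i + 1, by omega⟩ > π ⟨i, by omega⟩ ↔ i = b - 1)) := by
    apply Finset.filter_congr
    intro π _
    rw [updown_eq_iff n t ht htn π]
    constructor
    · intro h i hi
      have h2 := h ⟨i, by omega⟩
      constructor
      · intro ha
        have h3 : i = n - 1 - t := h2.mp ha
        omega
      · intro he
        exact h2.mpr (show i = n - 1 - t by omega)
    · intro h i
      have hlt := i.isLt
      have h2 := h i.val (by omega)
      constructor
      · intro ha
        have h3 : i.val = b - 1 := h2.mp ha
        omega
      · intro he
        exact h2.mpr (show i.val = b - 1 by omega)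
  have hcard : (univ.filter (fun π : Equiv.Perm (Fin n) =>
          ∀ (i : ℕ) (h : i + 1 ≤ n - 1),
            (π ⟨i + 1, by omega⟩ > π ⟨i, by omega⟩ ↔ i = b - 1))).card
      = ((univ.powersetCard b).erase (badSet n b)).card := by
    refine Finset.card_bij'
      (fun π _ => univ.filter (fun j : Fin n => ((Equiv.symm π) j).val < b))
      (fun s hs => blockPerm b hbn.le s
        (Finset.mem_powersetCard_univ.mp (Finset.mem_erase.mp hs).2))
      ?hi ?hj ?li ?ri
    case hi =>
      intro π hπ
      have hpat := (Finset.mem_filter.mp hπ).2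
      rw [Finset.mem_erase]
      refine ⟨?_, Finset.mem_powersetCard_univ.mpr (sOf_card b hbn.le π)⟩
      -- s π ≠ badSet
      intro hbad
      have hasc : π ⟨b - 1 + 1, by omega⟩ > π ⟨b - 1, by omega⟩ :=
        (hpat (b - 1) (by omega)).mpr rfl
      have hmem1 : π ⟨b - 1, by omega⟩ ∈
          univ.filter (fun j : Fin n => ((Equiv.symm π) j).val < b) := by
        simp only [mem_filter, mem_univ, true_and, Equiv.symm_apply_apply]
        exact (show b - 1 < b by omega)
      have hmem2 : π ⟨b - 1 + 1, by omega⟩ ∉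
          univ.filter (fun j : Fin n => ((Equiv.symm π) j).val < b) := by
        simp only [mem_filter, mem_univ, true_and, Equiv.symm_apply_apply]
        exact (show ¬ (b - 1 + 1 < b) by omega)
      have hbad' : univ.filter (fun j : Fin n => ((Equiv.symm π) j).val < b) = badSet n b := hbad
      rw [hbad'] at hmem1 hmem2
      simp only [badSet, mem_filter, mem_univ, true_and, Nat.not_le] at hmem1 hmem2
      have hlt : (π ⟨b - 1, by omega⟩).val < (π ⟨b - 1 + 1, by omega⟩).val := hasc
      omega
    case hj =>
      intro s hs
      have hsne := (Finset.mem_erase.mp hs).1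
      have hscard := Finset.mem_powersetCard_univ.mp (Finset.mem_erase.mp hs).2
      rw [Finset.mem_filter]
      exact ⟨mem_univ _, fun i hi => blockPerm_pattern b hb1 hbn s hscard hsne i hi⟩
    case li =>
      intro π hπ
      exact eq_blockPerm b hb1 hbn π (Finset.mem_filter.mp hπ).2
    case ri =>
      intro s hs
      exact blockPerm_filter b hbn.le s _
  unfold U
  rw [hfilter, hcard]
  rw [Finset.card_erase_of_mem
    (Finset.mem_powersetCard_univ.mpr (badSet_card b hbn.le))]
  rw [Finset.card_powersetCard, Finset.card_univ, Fintype.card_fin]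
  rw [hbdef, Nat.choose_symm htn.le]
end

section
/- Let U(n,k) be the number of permutations of {1,…,n} with up-down index k. Then for all integers n > t > u ≥ 1, U(n, 2^{t-1}+2^{u-1}) = (C(t,u) − 1)·C(n,t) − C(n,u) + 1. -/
open Finset
set_option maxHeartbeats 1600000

namespace UDAux

variable {n : ℕ}

/-- Ascent at position `i`. -/
def Asc (n : ℕ) (π : Equiv.Perm (Fin n)) (i : Fin (n - 1)) : Prop :=
  π ⟨i.val + 1, by have := i.isLt; omega⟩ > π ⟨i.val, by have := i.isLt; omega⟩

instance (n : ℕ) (π : Equiv.Perm (Fin n)) (i : Fin (n - 1)) : Decidable (Asc n π i) := by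
  unfold Asc; infer_instance

lemma updownIndex_eq (π : Equiv.Perm (Fin n)) :
    updownIndex n π = ∑ i ∈ univ.filter (fun i => Asc n π i), 2 ^ (n - 2 - i.val) := by
  rw [sum_filter]; rfl

lemma asc_iff (π : Equiv.Perm (Fin n)) (i : Fin (n - 1)) (h1 : i.val + 1 < n)
    (h2 : i.val < n) :
    Asc n π i ↔ π ⟨i.val + 1, h1⟩ > π ⟨i.val, h2⟩ := Iff.rfl

/-- If all ascents are at split points `p`, `q`, the permutation descends at each
position `a+1 ∉ {p, q}`. -/
lemma desc_consec {p q : ℕ} {π : Equiv.Perm (Fin n)}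
    (hπ : ∀ i : Fin (n - 1), Asc n π i → (i.val + 1 = p ∨ i.val + 1 = q))
    {a : ℕ} (ha : a + 1 < n) (hp : a + 1 ≠ p) (hq : a + 1 ≠ q) :
    π ⟨a + 1, ha⟩ < π ⟨a, by omega⟩ := by
  have han : a < n - 1 := by omega
  rcases lt_trichotomy (π ⟨a + 1, ha⟩) (π ⟨a, by omega⟩) with h | h | h
  · exact h
  · exfalso
    have := π.injective h
    have := congrArg Fin.val this
    simp at this
  · exfalso
    have hAsc : Asc n π ⟨a, han⟩ := by
      rw [asc_iff π ⟨a, han⟩ (by omega) (by omega)]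
      exact h
    rcases hπ _ hAsc with h' | h' <;> simp at h' <;> omega

/-- Descending across a whole block. -/
lemma desc_chain {p q : ℕ} {π : Equiv.Perm (Fin n)}
    (hπ : ∀ i : Fin (n - 1), Asc n π i → (i.val + 1 = p ∨ i.val + 1 = q))
    (hpq : p ≤ q) :
    ∀ d a b : ℕ, (ha : a < n) → (hb : b < n) → b = a + 1 + d →
      (b < p ∨ (p ≤ a ∧ b < q) ∨ q ≤ a) →
      π ⟨b, hb⟩ < π ⟨a, ha⟩ := by
  intro d
  induction d with
  | zero =>
    intro a b ha hb hab hreg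
    have hb' : b = a + 1 := by omega
    subst hb'
    exact desc_consec hπ hb (by omega) (by omega)
  | succ d ih =>
    intro a b ha hb hab hreg
    have hcn : a + 1 + d < n := by omega
    have h1 : π ⟨a + 1 + d, hcn⟩ < π ⟨a, ha⟩ := ih a (a + 1 + d) ha hcn rfl (by omega)
    have h2 : π ⟨b, hb⟩ < π ⟨a + 1 + d, hcn⟩ := by
      have hb2 : b = (a + 1 + d) + 1 := by omega
      subst hb2
      exact desc_consec hπ hb (by omega) (by omega)
    exact h2.trans h1
end UDAux

namespace UDAux

/-- The inverse construction: from `Y ⊆ X ⊆ Fin n` with `|Y| = p`, `|X| = q`, build the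
function which lists `Y` decreasingly, then `X \ Y` decreasingly, then `Xᶜ` decreasingly. -/
def bwdFun (n p q : ℕ) (X Y : Finset (Fin n)) (hY : Y.card = p)
    (hXY : (X \ Y).card = q - p) (hXc : Xᶜ.card = n - q) (hpq : p ≤ q) :
    Fin n → Fin n :=
  fun i =>
    if h1 : i.val < p then Y.orderEmbOfFin hY ⟨p - 1 - i.val, by omega⟩
    else if h2 : i.val < q then (X \ Y).orderEmbOfFin hXY ⟨q - 1 - i.val, by omega⟩
    else Xᶜ.orderEmbOfFin hXc ⟨n - 1 - i.val, by have := i.isLt; omega⟩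

section BwdFun

variable {p q : ℕ} {X Y : Finset (Fin n)} (hYX : Y ⊆ X) (hY : Y.card = p)
  (hXY : (X \ Y).card = q - p) (hXc : Xᶜ.card = n - q) (hpq : p ≤ q)

lemma bwdFun_mem1 {i : Fin n} (h : i.val < p) :
    bwdFun n p q X Y hY hXY hXc hpq i ∈ Y := by
  rw [bwdFun, dif_pos h]; exact Finset.orderEmbOfFin_mem _ _ _

lemma bwdFun_mem2 {i : Fin n} (h : ¬ i.val < p) (h' : i.val < q) :
    bwdFun n p q X Y hY hXY hXc hpq i ∈ X \ Y := by
  rw [bwdFun, dif_neg h, dif_pos h']; exact Finset.orderEmbOfFin_mem _ _ _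

lemma bwdFun_mem3 {i : Fin n} (h : ¬ i.val < p) (h' : ¬ i.val < q) :
    bwdFun n p q X Y hY hXY hXc hpq i ∈ Xᶜ := by
  rw [bwdFun, dif_neg h, dif_neg h']; exact Finset.orderEmbOfFin_mem _ _ _

include hYX in
lemma bwdFun_injective :
    Function.Injective (bwdFun n p q X Y hY hXY hXc hpq) := by
  have hY1 : ∀ k : Fin n, bwdFun n p q X Y hY hXY hXc hpq k ∈ Y ↔ k.val < p := by
    intro k
    constructor
    · intro hmem
      by_contra h
      by_cases h2 : k.val < q
      · exact (mem_sdiff.mp (bwdFun_mem2 hY hXY hXc hpq h h2)).2 hmem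
      · exact (mem_compl.mp (bwdFun_mem3 hY hXY hXc hpq h h2)) (hYX hmem)
    · exact fun h => bwdFun_mem1 hY hXY hXc hpq h
  have hY2 : ∀ k : Fin n, bwdFun n p q X Y hY hXY hXc hpq k ∈ X \ Y ↔
      (¬ k.val < p ∧ k.val < q) := by
    intro k
    constructor
    · intro hmem
      constructor
      · intro h
        exact (mem_sdiff.mp hmem).2 (bwdFun_mem1 hY hXY hXc hpq h)
      · by_contra h2
        by_cases h : k.val < p
        · exact (mem_sdiff.mp hmem).2 (bwdFun_mem1 hY hXY hXc hpq h)
        · exact (mem_compl.mp (bwdFun_mem3 hY hXY hXc hpq h (by omega)))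
            (mem_sdiff.mp hmem).1
    · exact fun ⟨h, h2⟩ => bwdFun_mem2 hY hXY hXc hpq h h2
  intro i j hij
  have hip : i.val < p ↔ j.val < p := by rw [← hY1 i, ← hY1 j, hij]
  have hiq : (¬ i.val < p ∧ i.val < q) ↔ (¬ j.val < p ∧ j.val < q) := by
    rw [← hY2 i, ← hY2 j, hij]
  by_cases h1 : i.val < p
  · have h1' := hip.mp h1
    simp only [bwdFun] at hij
    rw [dif_pos h1, dif_pos h1'] at hij
    have := congrArg Fin.val ((Y.orderEmbOfFin hY).injective hij)
    simp at this
    exact Fin.ext (by omega)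
  · by_cases h2 : i.val < q
    · obtain ⟨h1', h2'⟩ := hiq.mp ⟨h1, h2⟩
      simp only [bwdFun] at hij
      rw [dif_neg h1, dif_pos h2, dif_neg h1', dif_pos h2'] at hij
      have := congrArg Fin.val (((X \ Y).orderEmbOfFin hXY).injective hij)
      simp at this
      exact Fin.ext (by omega)
    · have h1' : ¬ j.val < p := fun h => h1 (hip.mpr h)
      have h2' : ¬ j.val < q := fun h => h2 (hiq.mpr ⟨h1', h⟩).2
      simp only [bwdFun] at hij
      rw [dif_neg h1, dif_neg h2, dif_neg h1', dif_neg h2'] at hij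
      have := congrArg Fin.val ((Xᶜ.orderEmbOfFin hXc).injective hij)
      simp at this
      have hi := i.isLt; have hj := j.isLt
      exact Fin.ext (by omega)

include hYX in
lemma bwdFun_bijective :
    Function.Bijective (bwdFun n p q X Y hY hXY hXc hpq) :=
  Finite.injective_iff_bijective.mp (bwdFun_injective hYX hY hXY hXc hpq)

end BwdFun

/-- The total inverse map, defined with junk value outside the good set. -/
noncomputable def bwd (n p q : ℕ) (hpq : p ≤ q) (b : Σ _ : Finset (Fin n), Finset (Fin n)) :
    Equiv.Perm (Fin n) :=
  if h : b.2 ⊆ b.1 ∧ b.2.card = p ∧ (b.1 \ b.2).card = q - p ∧ (b.1)ᶜ.card = n - q then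
    Equiv.ofBijective _ (bwdFun_bijective h.1 h.2.1 h.2.2.1 h.2.2.2 hpq)
  else 1

lemma bwd_apply (n p q : ℕ) (hpq : p ≤ q) (b : Σ _ : Finset (Fin n), Finset (Fin n))
    (h : b.2 ⊆ b.1 ∧ b.2.card = p ∧ (b.1 \ b.2).card = q - p ∧ (b.1)ᶜ.card = n - q)
    (x : Fin n) :
    bwd n p q hpq b x = bwdFun n p q b.1 b.2 h.2.1 h.2.2.1 h.2.2.2 hpq x := by
  rw [bwd, dif_pos h]
  rfl

lemma card_filter_lt (n m : ℕ) (h : m ≤ n) :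
    (univ.filter (fun i : Fin n => i.val < m)).card = m := by
  have he : (univ.filter (fun i : Fin n => i.val < m))
      = (Finset.range m).attachFin (fun x hx => lt_of_lt_of_le (mem_range.mp hx) h) := by
    ext i
    simp [Finset.mem_attachFin, mem_range]
  rw [he, Finset.card_attachFin, card_range]

/-- The main counting lemma: permutations whose ascents all lie at split points `p, q`
number `C(n,q) * C(q,p)`. -/
lemma card_D (n p q : ℕ) (hpq : p ≤ q) (hqn : q ≤ n) :
    (univ.filter (fun π : Equiv.Perm (Fin n) =>
       ∀ i : Fin (n - 1), Asc n π i → (i.val + 1 = p ∨ i.val + 1 = q))).card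
      = n.choose q * q.choose p := by
  classical
  have hcardT : ((univ.powersetCard q).sigma
      (fun X : Finset (Fin n) => X.powersetCard p)).card = n.choose q * q.choose p := by
    rw [card_sigma,
      Finset.sum_congr rfl (fun X hX => by
        rw [card_powersetCard, (mem_powersetCard.mp hX).2]),
      sum_const, card_powersetCard, card_univ, Fintype.card_fin, smul_eq_mul]
  rw [← hcardT]
  apply card_nbij'
    (i := fun π => ⟨(univ.filter (fun i : Fin n => i.val < q)).image π,
                    (univ.filter (fun i : Fin n => i.val < p)).image π⟩)
    (j := bwd n p q hpq)
  · -- forward membership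
    intro π _
    rw [mem_coe, mem_sigma]
    constructor
    · rw [mem_powersetCard]
      refine ⟨subset_univ _, ?_⟩
      rw [card_image_of_injective _ π.injective, card_filter_lt n q hqn]
    · rw [mem_powersetCard]
      refine ⟨image_subset_image
          (fun x hx => mem_filter.mpr ⟨mem_univ _, by have := (mem_filter.mp hx).2; omega⟩), ?_⟩
      rw [card_image_of_injective _ π.injective, card_filter_lt n p (hpq.trans hqn)]
  · -- backward membership
    intro b hb
    rw [mem_coe, mem_sigma, mem_powersetCard] at hb
    obtain ⟨⟨-, hX⟩, hYmem⟩ := hb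
    rw [mem_powersetCard] at hYmem
    obtain ⟨hYX, hY⟩ := hYmem
    have hcond : b.2 ⊆ b.1 ∧ b.2.card = p ∧ (b.1 \ b.2).card = q - p ∧ (b.1)ᶜ.card = n - q :=
      ⟨hYX, hY, by rw [card_sdiff_of_subset hYX, hX, hY], by rw [card_compl, hX, Fintype.card_fin]⟩
    rw [mem_coe, mem_filter]
    refine ⟨mem_univ _, ?_⟩
    intro i hAsc
    by_contra hcon
    push_neg at hcon
    obtain ⟨hip, hiq⟩ := hcon
    have hi1n : i.val + 1 < n := by have := i.isLt; omega
    have hi0n : i.val < n := by have := i.isLt; omega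
    rw [asc_iff _ _ hi1n hi0n] at hAsc
    -- show instead a descent
    have hdesc : bwd n p q hpq b ⟨i.val + 1, hi1n⟩
        < bwd n p q hpq b ⟨i.val, hi0n⟩ := by
      rw [bwd_apply n p q hpq b hcond, bwd_apply n p q hpq b hcond]
      have hin := i.isLt
      rcases show i.val + 1 < p ∨ (p ≤ i.val ∧ i.val + 1 < q) ∨ q ≤ i.val by omega with
        h | ⟨h, h'⟩ | h
      · rw [bwdFun, dif_pos (show i.val + 1 < p by omega), bwdFun,
          dif_pos (show i.val < p by omega)]
        exact (b.2.orderEmbOfFin hcond.2.1).strictMono (by simp; omega)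
      · rw [bwdFun, dif_neg (show ¬ i.val + 1 < p by omega),
          dif_pos (show i.val + 1 < q by omega), bwdFun,
          dif_neg (show ¬ i.val < p by omega), dif_pos (show i.val < q by omega)]
        exact ((b.1 \ b.2).orderEmbOfFin hcond.2.2.1).strictMono (by simp; omega)
      · rw [bwdFun, dif_neg (show ¬ i.val + 1 < p by omega),
          dif_neg (show ¬ i.val + 1 < q by omega), bwdFun,
          dif_neg (show ¬ i.val < p by omega), dif_neg (show ¬ i.val < q by omega)]
        exact (b.1ᶜ.orderEmbOfFin hcond.2.2.2).strictMono (by simp; omega)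
    exact absurd hAsc (not_lt.mpr hdesc.le)
  · -- left inverse : bwd (fwd π) = π
    intro π hπ
    rw [mem_coe, mem_filter] at hπ
    have hπ := hπ.2
    set X : Finset (Fin n) := (univ.filter (fun i : Fin n => i.val < q)).image π with hXdef
    set Y : Finset (Fin n) := (univ.filter (fun i : Fin n => i.val < p)).image π with hYdef
    have hX : X.card = q := by
      rw [hXdef, card_image_of_injective _ π.injective, card_filter_lt n q hqn]
    have hY : Y.card = p := by
      rw [hYdef, card_image_of_injective _ π.injective, card_filter_lt n p (hpq.trans hqn)]
    have hYX : Y ⊆ X := image_subset_image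
      (fun x hx => mem_filter.mpr ⟨mem_univ _, by have := (mem_filter.mp hx).2; omega⟩)
    have hcond : Y ⊆ X ∧ Y.card = p ∧ (X \ Y).card = q - p ∧ Xᶜ.card = n - q :=
      ⟨hYX, hY, by rw [card_sdiff_of_subset hYX, hX, hY], by rw [card_compl, hX, Fintype.card_fin]⟩
    show bwd n p q hpq ⟨X, Y⟩ = π
    apply Equiv.ext
    intro i
    rw [bwd_apply n p q hpq ⟨X, Y⟩ hcond i]
    -- three order embeddings agree with reversed π on each block
    have hg1 : ∀ (hp0 : 0 < p) (j : Fin p), Y.orderEmbOfFin hcond.2.1 j = π ⟨p - 1 - j.val, by omega⟩ := by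
      intro hp0
      have := Finset.orderEmbOfFin_unique (f := fun j : Fin p => π ⟨p - 1 - j.val, by have := j.isLt; omega⟩)
        hcond.2.1 (fun x => by
          have hx := x.isLt
          exact mem_image_of_mem _
            (mem_filter.mpr ⟨mem_univ _, show p - 1 - x.val < p by omega⟩))
        (by
          intro x y hxy
          have hx := x.isLt; have hy := y.isLt
          exact desc_chain hπ hpq (p - 1 - x.val - (p - 1 - y.val) - 1) (p - 1 - y.val)
            (p - 1 - x.val) (by omega) (by omega) (by omega) (by omega))
      intro j
      exact (congrFun this j).symm
    have hg2 : ∀ (hq0 : p < q) (j : Fin (q - p)), (X \ Y).orderEmbOfFin hcond.2.2.1 j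
        = π ⟨q - 1 - j.val, by omega⟩ := by
      intro hq0
      have := Finset.orderEmbOfFin_unique (f := fun j : Fin (q - p) => π ⟨q - 1 - j.val, by have := j.isLt; omega⟩)
        hcond.2.2.1 (fun x => by
          have hx := x.isLt
          rw [mem_sdiff]
          constructor
          · exact mem_image_of_mem _
              (mem_filter.mpr ⟨mem_univ _, show q - 1 - x.val < q by omega⟩)
          · intro hmem
            obtain ⟨z, hz, hz2⟩ := mem_image.mp hmem
            rw [mem_filter] at hz
            have := π.injective hz2
            have := congrArg Fin.val this
            simp at this
            omega)
        (by
          intro x y hxy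
          have hx := x.isLt; have hy := y.isLt
          exact desc_chain hπ hpq (q - 1 - x.val - (q - 1 - y.val) - 1) (q - 1 - y.val)
            (q - 1 - x.val) (by omega) (by omega) (by omega) (by omega))
      intro j
      exact (congrFun this j).symm
    have hg3 : ∀ (hn0 : q < n) (j : Fin (n - q)), Xᶜ.orderEmbOfFin hcond.2.2.2 j
        = π ⟨n - 1 - j.val, by omega⟩ := by
      intro hn0
      have := Finset.orderEmbOfFin_unique (f := fun j : Fin (n - q) => π ⟨n - 1 - j.val, by have := j.isLt; omega⟩)
        hcond.2.2.2 (fun x => by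
          have hx := x.isLt
          rw [mem_compl]
          intro hmem
          obtain ⟨z, hz, hz2⟩ := mem_image.mp hmem
          rw [mem_filter] at hz
          have := π.injective hz2
          have := congrArg Fin.val this
          simp at this
          omega)
        (by
          intro x y hxy
          have hx := x.isLt; have hy := y.isLt
          exact desc_chain hπ hpq (n - 1 - x.val - (n - 1 - y.val) - 1) (n - 1 - y.val)
            (n - 1 - x.val) (by omega) (by omega) (by omega) (by omega))
      intro j
      exact (congrFun this j).symm
    have hin := i.isLt
    rcases show i.val < p ∨ (p ≤ i.val ∧ i.val < q) ∨ q ≤ i.val by omega with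
      h | ⟨h, h'⟩ | h
    · rw [bwdFun, dif_pos h, hg1 (by omega)]
      congr 1
      exact Fin.ext (by simp; omega)
    · rw [bwdFun, dif_neg (by omega), dif_pos h', hg2 (by omega)]
      congr 1
      exact Fin.ext (by simp; omega)
    · rw [bwdFun, dif_neg (by omega), dif_neg (by omega), hg3 (by omega)]
      congr 1
      exact Fin.ext (by simp; omega)
  · -- right inverse : fwd (bwd b) = b
    intro b hb
    rw [mem_coe, mem_sigma, mem_powersetCard] at hb
    obtain ⟨⟨-, hX⟩, hYmem⟩ := hb
    rw [mem_powersetCard] at hYmem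
    obtain ⟨hYX, hY⟩ := hYmem
    have hcond : b.2 ⊆ b.1 ∧ b.2.card = p ∧ (b.1 \ b.2).card = q - p ∧ (b.1)ᶜ.card = n - q :=
      ⟨hYX, hY, by rw [card_sdiff_of_subset hYX, hX, hY], by rw [card_compl, hX, Fintype.card_fin]⟩
    have hcoe : ⇑(bwd n p q hpq b)
        = bwdFun n p q b.1 b.2 hcond.2.1 hcond.2.2.1 hcond.2.2.2 hpq :=
      funext (fun x => bwd_apply n p q hpq b hcond x)
    have hinj := bwdFun_injective hcond.1 hcond.2.1 hcond.2.2.1 hcond.2.2.2 hpq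
    have himg1 : (univ.filter (fun i : Fin n => i.val < p)).image
        (bwdFun n p q b.1 b.2 hcond.2.1 hcond.2.2.1 hcond.2.2.2 hpq) = b.2 := by
      apply eq_of_subset_of_card_le
      · intro y hy
        rw [mem_image] at hy
        obtain ⟨z, hz, hz2⟩ := hy
        rw [mem_filter] at hz
        rw [← hz2]
        exact bwdFun_mem1 hcond.2.1 hcond.2.2.1 hcond.2.2.2 hpq hz.2
      · rw [card_image_of_injective _ hinj, card_filter_lt n p (hpq.trans hqn), hY]
    have himg2 : (univ.filter (fun i : Fin n => i.val < q)).image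
        (bwdFun n p q b.1 b.2 hcond.2.1 hcond.2.2.1 hcond.2.2.2 hpq) = b.1 := by
      apply eq_of_subset_of_card_le
      · intro y hy
        rw [mem_image] at hy
        obtain ⟨z, hz, hz2⟩ := hy
        rw [mem_filter] at hz
        rw [← hz2]
        by_cases hzp : z.val < p
        · exact hcond.1 (bwdFun_mem1 hcond.2.1 hcond.2.2.1 hcond.2.2.2 hpq hzp)
        · exact (mem_sdiff.mp
            (bwdFun_mem2 hcond.2.1 hcond.2.2.1 hcond.2.2.2 hpq hzp hz.2)).1
      · rw [card_image_of_injective _ hinj, card_filter_lt n q hqn, hX]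
    refine Sigma.ext ?_ (heq_of_eq ?_)
    · show (univ.filter (fun i : Fin n => i.val < q)).image (⇑(bwd n p q hpq b)) = b.1
      exact (Finset.image_congr (fun x _ => bwd_apply n p q hpq b hcond x)).trans himg2
    · show (univ.filter (fun i : Fin n => i.val < p)).image (⇑(bwd n p q hpq b)) = b.2
      exact (Finset.image_congr (fun x _ => bwd_apply n p q hpq b hcond x)).trans himg1

end UDAux

open UDAux in
theorem U_two_ascents (n t u : ℕ) (hu : 1 ≤ u) (hut : u < t) (htn : t < n) :
    (U n (2 ^ (t - 1) + 2 ^ (u - 1)) : ℤ) =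
      ((Nat.choose t u : ℤ) - 1) * Nat.choose n t - Nat.choose n u + 1 := by
  classical
  set p := n - t with hp
  set q := n - u with hq
  have hp0 : 0 < p := by omega
  have hpq : p < q := by omega
  have hqn : q ≤ n := by omega
  set a : Fin (n - 1) := ⟨n - 1 - t, by omega⟩ with ha
  set b : Fin (n - 1) := ⟨n - 1 - u, by omega⟩ with hb
  have hab : a ≠ b := by
    intro h
    have := congrArg Fin.val h
    simp [ha, hb] at this
    omega
  -- characterize updownIndex = k
  have hchar : ∀ π : Equiv.Perm (Fin n),
      updownIndex n π = 2 ^ (t - 1) + 2 ^ (u - 1) ↔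
        univ.filter (fun i => Asc n π i) = {a, b} := by
    intro π
    have he : Function.Injective (fun i : Fin (n - 1) => n - 2 - i.val) := by
      intro x y h
      have hx := x.isLt; have hy := y.isLt
      simp only at h
      exact Fin.ext (by omega)
    have hsum : ∀ s : Finset (Fin (n - 1)),
        ∑ i ∈ s, 2 ^ (n - 2 - i.val) = ∑ j ∈ s.image (fun i : Fin (n - 1) => n - 2 - i.val), 2 ^ j := by
      intro s
      rw [Finset.sum_image (fun x _ y _ h => he h)]
    have hpair : ({a, b} : Finset (Fin (n - 1))).image (fun i : Fin (n - 1) => n - 2 - i.val)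
        = {t - 1, u - 1} := by
      rw [image_insert, image_singleton]
      simp only [ha, hb]
      congr 1 <;> [skip; congr 1] <;> omega
    have hksum : 2 ^ (t - 1) + 2 ^ (u - 1) = ∑ j ∈ ({t - 1, u - 1} : Finset ℕ), 2 ^ j := by
      rw [Finset.sum_pair (by omega)]
    constructor
    · intro h
      rw [updownIndex_eq, hsum, hksum] at h
      have := Finset.geomSum_injective (n := 2) le_rfl h
      have himg : (univ.filter (fun i => Asc n π i)).image (fun i : Fin (n - 1) => n - 2 - i.val)
          = ({a, b} : Finset (Fin (n - 1))).image (fun i : Fin (n - 1) => n - 2 - i.val) := by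
        rw [hpair]; exact this
      exact Finset.image_injective he himg
    · intro h
      rw [updownIndex_eq, hsum, h, hpair, hksum]
  -- translate conditions
  have htrans : ∀ (i : Fin (n - 1)), (i.val + 1 = p ↔ i = a) ∧ (i.val + 1 = q ↔ i = b) := by
    intro i
    have hi := i.isLt
    constructor
    · constructor
      · intro h; exact Fin.ext (by simp [ha]; omega)
      · intro h; subst h; simp [ha]; omega
    · constructor
      · intro h; exact Fin.ext (by simp [hb]; omega)
      · intro h; subst h; simp [hb]; omega
  set Dab := univ.filter (fun π : Equiv.Perm (Fin n) =>
       ∀ i : Fin (n - 1), Asc n π i → (i.val + 1 = p ∨ i.val + 1 = q)) with hDab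
  set Da := univ.filter (fun π : Equiv.Perm (Fin n) =>
       ∀ i : Fin (n - 1), Asc n π i → (i.val + 1 = p ∨ i.val + 1 = p)) with hDa
  set Db := univ.filter (fun π : Equiv.Perm (Fin n) =>
       ∀ i : Fin (n - 1), Asc n π i → (i.val + 1 = q ∨ i.val + 1 = q)) with hDb
  set D0 := univ.filter (fun π : Equiv.Perm (Fin n) =>
       ∀ i : Fin (n - 1), Asc n π i → (i.val + 1 = 0 ∨ i.val + 1 = 0)) with hD0
  have hE : univ.filter (fun π : Equiv.Perm (Fin n) =>
      updownIndex n π = 2 ^ (t - 1) + 2 ^ (u - 1)) = Dab \ (Da ∪ Db) := by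
    ext π
    rw [mem_filter, mem_sdiff, mem_union, hDab, hDa, hDb, mem_filter, mem_filter, mem_filter]
    simp only [mem_univ, true_and]
    rw [hchar π]
    constructor
    · intro h
      refine ⟨fun i hi => ?_, ?_⟩
      · have : i ∈ ({a, b} : Finset (Fin (n - 1))) := h ▸ mem_filter.mpr ⟨mem_univ _, hi⟩
        rw [mem_insert, mem_singleton] at this
        rcases this with h' | h'
        · exact Or.inl ((htrans i).1.mpr h')
        · exact Or.inr ((htrans i).2.mpr h')
      · rintro (hcon | hcon)
        · have hbmem : b ∈ univ.filter (fun i => Asc n π i) := by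
            rw [h]; simp
          have := hcon b (mem_filter.mp hbmem).2
          have : b = a := by
            rcases this with h' | h' <;> exact (htrans b).1.mp h'
          exact hab this.symm
        · have hamem : a ∈ univ.filter (fun i => Asc n π i) := by
            rw [h]; simp
          have := hcon a (mem_filter.mp hamem).2
          have : a = b := by
            rcases this with h' | h' <;> exact (htrans a).2.mp h'
          exact hab this
    · rintro ⟨hsub, hnot⟩
      push_neg at hnot
      obtain ⟨hna, hnb⟩ := hnot
      obtain ⟨i0, hi0, hne0, -⟩ := hna
      obtain ⟨j0, hj0, hne1, -⟩ := hnb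
      have hbmem : Asc n π b := by
        have : i0 = b := (htrans i0).2.mp ((hsub i0 hi0).resolve_left hne0)
        exact this ▸ hi0
      have hamem : Asc n π a := by
        have : j0 = a := (htrans j0).1.mp ((hsub j0 hj0).resolve_right hne1)
        exact this ▸ hj0
      apply Finset.Subset.antisymm
      · intro i hi
        rw [mem_filter] at hi
        rcases hsub i hi.2 with h' | h'
        · rw [mem_insert]; exact Or.inl ((htrans i).1.mp h')
        · rw [mem_insert, mem_singleton]; exact Or.inr ((htrans i).2.mp h')
      · intro i hi
        rw [mem_insert, mem_singleton] at hi
        rcases hi with h' | h' <;> subst h' <;> rw [mem_filter] <;>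
          exact ⟨mem_univ _, by assumption⟩
  have hDaDb : Da ∩ Db = D0 := by
    ext π
    rw [mem_inter, hDa, hDb, hD0, mem_filter, mem_filter, mem_filter]
    simp only [mem_univ, true_and, or_self]
    constructor
    · rintro ⟨h1, h2⟩ i hi
      have e1 := h1 i hi
      have e2 := h2 i hi
      omega
    · intro h
      exact ⟨fun i hi => absurd (h i hi) (by omega), fun i hi => absurd (h i hi) (by omega)⟩
  have hsubab : Da ∪ Db ⊆ Dab := by
    apply union_subset
    · rw [hDa, hDab]
      intro π h
      rw [mem_filter] at h ⊢
      exact ⟨h.1, fun i hi => Or.inl ((h.2 i hi).elim id id)⟩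
    · rw [hDb, hDab]
      intro π h
      rw [mem_filter] at h ⊢
      exact ⟨h.1, fun i hi => Or.inr ((h.2 i hi).elim id id)⟩
  -- cardinalities
  have hcDab : Dab.card = n.choose q * q.choose p := card_D n p q hpq.le hqn
  have hcDa : Da.card = n.choose p * p.choose p := card_D n p p le_rfl (by omega)
  have hcDb : Db.card = n.choose q * q.choose q := card_D n q q le_rfl hqn
  have hcD0 : D0.card = n.choose 0 * Nat.choose 0 0 := card_D n 0 0 le_rfl (by omega)
  simp only [Nat.choose_self, Nat.choose_zero_right, mul_one, one_mul] at hcDa hcDb hcD0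
  have heq1 : (Da ∪ Db).card + 1 = Da.card + Db.card := by
    rw [← card_union_add_card_inter, hDaDb, hcD0]
  have heq2 : (Dab \ (Da ∪ Db)).card + (Da ∪ Db).card = Dab.card :=
    card_sdiff_add_card_eq_card hsubab
  -- binomial identities
  have hb1 : n.choose q * q.choose p = n.choose t * t.choose u := by
    rw [hp, hq]
    rw [Nat.choose_mul (by omega)]
    have e1 : n - (n - t) = t := by omega
    have e2 : (n - u) - (n - t) = t - u := by omega
    rw [e1, e2, Nat.choose_symm (by omega), Nat.choose_symm (by omega)]
  have hb2 : n.choose p = n.choose t := by rw [hp, Nat.choose_symm (by omega)]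
  have hb3 : n.choose q = n.choose u := by rw [hq, Nat.choose_symm (by omega)]
  rw [U, hE]
  have hz2 : ((Dab \ (Da ∪ Db)).card : ℤ) + (Da ∪ Db).card = Dab.card := by
    exact_mod_cast congrArg (fun x : ℕ => (x : ℤ)) heq2
  have hz1 : ((Da ∪ Db).card : ℤ) + 1 = Da.card + Db.card := by
    exact_mod_cast congrArg (fun x : ℕ => (x : ℤ)) heq1
  have hvDab : (Dab.card : ℤ) = (n.choose t : ℤ) * t.choose u := by
    rw [hcDab, hb1]; push_cast; ring
  have hvDa : (Da.card : ℤ) = (n.choose t : ℤ) := by rw [hcDa, hb2]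
  have hvDb : (Db.card : ℤ) = (n.choose u : ℤ) := by rw [hcDb, hb3]
  rw [hvDab] at hz2
  rw [hvDa, hvDb] at hz1
  linarith
end

section
/- Let U(n,k) be the number of permutations of {1,…,n} with up-down index k. Then for all integers n ≥ 1 and r with 1 ≤ r ≤ n−1, Σ_{k=0}^{2^r − 1} U(n,k) = n·(n−1)···(n−r+1) (the falling factorial of n of length r). -/
open Finset

-- helper: adjacent descents give strict anti
lemma aux_strictAnti {α : Type*} [Preorder α] {N : ℕ} (f : Fin N → α)
    (h : ∀ (i : ℕ) (hi : i + 1 < N), f ⟨i + 1, hi⟩ < f ⟨i, by omega⟩) : StrictAnti f := by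
  intro a b hab
  obtain ⟨a, ha⟩ := a; obtain ⟨b, hb⟩ := b
  rw [Fin.lt_def] at hab
  simp only at hab ⊢
  induction b with
  | zero => omega
  | succ b ih =>
    have step := h b hb
    rcases Nat.lt_or_ge a b with h' | h'
    · exact step.trans (ih (by omega) h')
    · have : a = b := by omega
      subst this
      exact step

-- helper: two strict anti maps into a finset of the right card coincide
lemma aux_anti_unique {n k : ℕ} (t : Finset (Fin n)) (ht : t.card = k)
    {f g : Fin k → Fin n} (hf : StrictAnti f) (hg : StrictAnti g)
    (hfm : ∀ x, f x ∈ t) (hgm : ∀ x, g x ∈ t) : f = g := by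
  set t' : Finset (Fin n)ᵒᵈ := t.image OrderDual.toDual with ht'
  have hc : t'.card = k := by
    rw [ht']
    rw [Finset.card_image_of_injective _ (OrderDual.toDual.injective)]
    exact ht
  have hf' : StrictMono (fun x => OrderDual.toDual (f x)) := fun a b hab => hf hab
  have hg' : StrictMono (fun x => OrderDual.toDual (g x)) := fun a b hab => hg hab
  have e1 := Finset.orderEmbOfFin_unique hc (f := fun x => OrderDual.toDual (f x))
    (fun x => Finset.mem_image.2 ⟨f x, hfm x, rfl⟩) hf'
  have e2 := Finset.orderEmbOfFin_unique hc (f := fun x => OrderDual.toDual (g x))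
    (fun x => Finset.mem_image.2 ⟨g x, hgm x, rfl⟩) hg'
  funext x
  have := congrFun (e1.trans e2.symm) x
  exact OrderDual.toDual.injective this

lemma two_pow_sum (r : ℕ) : ∑ i ∈ Finset.range r, 2 ^ i = 2 ^ r - 1 := by
  induction r with
  | zero => simp
  | succ r ih =>
    rw [Finset.sum_range_succ, ih, pow_succ]
    have : 1 ≤ 2 ^ r := Nat.one_le_two_pow
    omega

lemma updown_lt_iff (n r : ℕ) (hr : 1 ≤ r) (hrn : r ≤ n - 1) (π : Equiv.Perm (Fin n)) :
    updownIndex n π < 2 ^ r ↔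
      ∀ i : Fin (n - 1), i.val < n - 1 - r →
        π ⟨i.val + 1, by have := i.isLt; omega⟩ < π ⟨i.val, by have := i.isLt; omega⟩ := by
  constructor
  · intro h i hi
    by_contra hcon
    have hne : π ⟨i.val + 1, by have := i.isLt; omega⟩ ≠ π ⟨i.val, by have := i.isLt; omega⟩ := by
      intro he
      have := π.injective he
      rw [Fin.ext_iff] at this
      simp at this
    have hasc : π ⟨i.val + 1, by have := i.isLt; omega⟩ > π ⟨i.val, by have := i.isLt; omega⟩ :=
      lt_of_le_of_ne (not_lt.1 hcon) (Ne.symm hne)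
    have hle : 2 ^ r ≤ 2 ^ (n - 2 - i.val) :=
      Nat.pow_le_pow_right (by norm_num) (by have := i.isLt; omega)
    have hsum : 2 ^ (n - 2 - i.val) ≤ updownIndex n π := by
      unfold updownIndex
      have := Finset.single_le_sum
        (f := fun j : Fin (n - 1) =>
          if π ⟨j.val + 1, by have := j.isLt; omega⟩ > π ⟨j.val, by have := j.isLt; omega⟩
          then 2 ^ (n - 2 - j.val) else 0)
        (fun j _ => Nat.zero_le _) (Finset.mem_univ i)
      simpa [if_pos hasc] using this
    omega
  · intro h
    have hb : updownIndex n π ≤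
        ∑ i : Fin (n - 1), (if n - 1 - r ≤ i.val then 2 ^ (n - 2 - i.val) else 0) := by
      unfold updownIndex
      apply Finset.sum_le_sum
      intro i _
      by_cases hc : i.val < n - 1 - r
      · rw [if_neg (lt_asymm (h i hc))]
        exact Nat.zero_le _
      · rw [if_pos (show n - 1 - r ≤ i.val by omega)]
        split <;> simp
    have heq : ∑ i : Fin (n - 1), (if n - 1 - r ≤ i.val then 2 ^ (n - 2 - i.val) else 0)
        = 2 ^ r - 1 := by
      rw [Fin.sum_univ_eq_sum_range (fun i => if n - 1 - r ≤ i then 2 ^ (n - 2 - i) else 0),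
        ← Finset.sum_filter, ← two_pow_sum r]
      apply Finset.sum_nbij' (i := fun i => n - 2 - i) (j := fun e => n - 2 - e)
      · intro a ha
        simp only [Finset.mem_filter, Finset.mem_range] at ha
        simp only [Finset.mem_range]
        omega
      · intro a ha
        simp only [Finset.mem_range] at ha
        simp only [Finset.mem_filter, Finset.mem_range]
        omega
      · intro a ha
        simp only [Finset.mem_filter, Finset.mem_range] at ha
        omega
      · intro a ha
        simp only [Finset.mem_range] at ha
        omega
      · intro a ha
        rfl
    have h1 : 1 ≤ 2 ^ r := Nat.one_le_two_pow
    omega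

lemma compl_card (n r : ℕ) (f : Fin r ↪ Fin n) :
    ((Finset.univ.image f)ᶜ).card = n - r := by
  rw [Finset.card_compl, Finset.card_image_of_injective _ f.injective,
    Finset.card_univ, Fintype.card_fin, Fintype.card_fin]

noncomputable def reconFun (n r : ℕ) (f : Fin r ↪ Fin n) : Fin n → Fin n :=
  fun i =>
    if h : i.val < n - r then
      ((Finset.univ.image f)ᶜ).orderEmbOfFin (compl_card n r f) ⟨n - r - 1 - i.val, by omega⟩
    else f ⟨i.val - (n - r), by have := i.isLt; omega⟩

lemma reconFun_injective (n r : ℕ) (f : Fin r ↪ Fin n) : Function.Injective (reconFun n r f) := by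
  intro a b hab
  unfold reconFun at hab
  have hmemc : ∀ (x : Fin (n - r)),
      ((Finset.univ.image f)ᶜ).orderEmbOfFin (compl_card n r f) x ∉ Finset.univ.image f :=
    fun x => Finset.mem_compl.1 (Finset.orderEmbOfFin_mem _ (compl_card n r f) x)
  have hmemf : ∀ (x : Fin r), f x ∈ Finset.univ.image f :=
    fun x => Finset.mem_image.2 ⟨x, Finset.mem_univ x, rfl⟩
  split at hab <;> split at hab
  · have h2 := (((Finset.univ.image f)ᶜ).orderEmbOfFin (compl_card n r f)).injective hab
    rw [Fin.mk.injEq] at h2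
    exact Fin.ext (by omega)
  · exact absurd (hab ▸ hmemf _) (hmemc _)
  · exact absurd (hab.symm ▸ hmemf _) (hmemc _)
  · have h2 := f.injective hab
    rw [Fin.mk.injEq] at h2
    have ha := a.isLt
    have hb := b.isLt
    exact Fin.ext (by omega)

noncomputable def reconPerm (n r : ℕ) (f : Fin r ↪ Fin n) : Equiv.Perm (Fin n) :=
  Equiv.ofBijective (reconFun n r f)
    (Finite.injective_iff_bijective.1 (reconFun_injective n r f))

lemma reconPerm_apply (n r : ℕ) (f : Fin r ↪ Fin n) (i : Fin n) :
    reconPerm n r f i = reconFun n r f i := rfl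

lemma card_pred (n r : ℕ) (hr : 1 ≤ r) (hrn : r ≤ n - 1) (hn : 1 ≤ n) :
    (Finset.univ.filter (fun π : Equiv.Perm (Fin n) =>
      ∀ i : Fin (n - 1), i.val < n - 1 - r →
        π ⟨i.val + 1, by have := i.isLt; omega⟩ < π ⟨i.val, by have := i.isLt; omega⟩)).card
      = Nat.descFactorial n r := by
  have hnr : r + 1 ≤ n := by omega
  have hcard : (Finset.univ : Finset (Fin r ↪ Fin n)).card = Nat.descFactorial n r := by
    rw [Finset.card_univ, Fintype.card_embedding_eq, Fintype.card_fin, Fintype.card_fin]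
  rw [← hcard]
  apply Finset.card_nbij'
    (i := fun π => ⟨fun j => π ⟨n - r + j.val, by have := j.isLt; omega⟩,
      fun a b hab => by
        have h2 := π.injective hab
        rw [Fin.mk.injEq] at h2
        exact Fin.ext (by omega)⟩)
    (j := fun f => reconPerm n r f)
  · intro a _; exact Finset.mem_univ _
  · -- reconPerm satisfies the descent property
    intro f _
    simp only [Finset.mem_coe, Finset.mem_filter, Finset.mem_univ, true_and]
    intro i hi
    rw [reconPerm_apply, reconPerm_apply]
    unfold reconFun
    simp only [Fin.val_mk]
    rw [dif_pos (show i.val + 1 < n - r by omega), dif_pos (show i.val < n - r by omega)]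
    apply (((Finset.univ.image f)ᶜ).orderEmbOfFin (compl_card n r f)).strictMono
    rw [Fin.mk_lt_mk]
    omega
  · -- left inverse: reconPerm of the extracted embedding is π itself
    intro π hπ
    simp only [Finset.mem_coe, Finset.mem_filter, Finset.mem_univ, true_and] at hπ
    have hinj : Function.Injective (fun j : Fin r => π ⟨n - r + j.val, by have := j.isLt; omega⟩) := by
      intro a b hab
      have h2 := π.injective hab
      rw [Fin.mk.injEq] at h2
      exact Fin.ext (by omega)
    ext x
    rw [reconPerm_apply]
    unfold reconFun
    split
    · next h =>
      set s : Finset (Fin n) := Finset.univ.image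
        (fun j : Fin r => π ⟨n - r + j.val, by have := j.isLt; omega⟩) with hs
      have hcs : s.card = r := by
        rw [hs, Finset.card_image_of_injective _ hinj, Finset.card_univ, Fintype.card_fin]
      have hsc : sᶜ.card = n - r := by
        rw [Finset.card_compl, hcs, Fintype.card_fin]
      have key : (fun k : Fin (n - r) => π ⟨k.val, by have := k.isLt; omega⟩)
          = (fun k : Fin (n - r) =>
              sᶜ.orderEmbOfFin hsc ⟨n - r - 1 - k.val, by have := k.isLt; omega⟩) := by
        apply aux_anti_unique sᶜ hsc
        · apply aux_strictAnti
          intro i hi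
          have hlt : i < n - 1 - r := by omega
          exact hπ ⟨i, by omega⟩ hlt
        · intro a b hab
          apply (sᶜ.orderEmbOfFin hsc).strictMono
          rw [Fin.mk_lt_mk]
          have hb := b.isLt
          have hab' : (a : ℕ) < b := hab
          omega
        · intro x
          rw [Finset.mem_compl]
          intro hmem
          simp only [hs, Finset.mem_image] at hmem
          obtain ⟨j, _, hj⟩ := hmem
          have h2 := π.injective hj
          rw [Fin.mk.injEq] at h2
          have := x.isLt
          omega
        · intro x
          exact Finset.orderEmbOfFin_mem _ _ _
      have hk := congrFun key ⟨x.val, h⟩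
      exact congrArg Fin.val hk.symm
    · next h =>
      show ((π ⟨n - r + (x.val - (n - r)), by have := x.isLt; omega⟩ : Fin n) : ℕ) = (π x : ℕ)
      have hx : (⟨n - r + (x.val - (n - r)), by have := x.isLt; omega⟩ : Fin n) = x := by
        apply Fin.ext
        simp only
        have := x.isLt
        omega
      exact congrArg (fun t => ((π t : Fin n) : ℕ)) hx
  · -- right inverse
    intro f _
    ext j
    show ((reconPerm n r f ⟨n - r + j.val, by have := j.isLt; omega⟩ : Fin n) : ℕ) = (f j : ℕ)
    rw [reconPerm_apply]
    unfold reconFun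
    rw [dif_neg (show ¬ ((⟨n - r + j.val, by have := j.isLt; omega⟩ : Fin n) : ℕ) < n - r by simp)]
    have hx : (⟨((⟨n - r + j.val, by have := j.isLt; omega⟩ : Fin n) : ℕ) - (n - r), by have := j.isLt; simp⟩ : Fin r) = j := by
      apply Fin.ext
      simp only
      omega
    exact congrArg (fun t => ((f t : Fin n) : ℕ)) hx

theorem sum_U_descFactorial (n r : ℕ) (hr : 1 ≤ r) (hrn : r ≤ n - 1) (hn : 1 ≤ n) :
    ∑ k ∈ Finset.range (2 ^ r), U n k = Nat.descFactorial n r := by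
  rw [← card_pred n r hr hrn hn]
  have e1 : (Finset.univ.filter (fun π : Equiv.Perm (Fin n) =>
      ∀ i : Fin (n - 1), i.val < n - 1 - r →
        π ⟨i.val + 1, by have := i.isLt; omega⟩ < π ⟨i.val, by have := i.isLt; omega⟩))
      = Finset.univ.filter (fun π : Equiv.Perm (Fin n) => updownIndex n π < 2 ^ r) := by
    apply Finset.filter_congr
    intro π _
    exact ⟨fun h => (updown_lt_iff n r hr hrn π).2 h, fun h => (updown_lt_iff n r hr hrn π).1 h⟩
  rw [e1, Finset.card_eq_sum_card_fiberwise (f := fun π => updownIndex n π)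
    (t := Finset.range (2 ^ r)) (fun π hπ => Finset.mem_range.2 (Finset.mem_filter.1 hπ).2)]
  apply Finset.sum_congr rfl
  intro k hk
  simp only [Finset.mem_range] at hk
  unfold U
  congr 1
  rw [Finset.filter_filter]
  apply Finset.filter_congr
  intro π _
  exact ⟨fun h => ⟨lt_of_eq_of_lt h hk, h⟩, fun h => h.2⟩
end

section
/- Let U(n,k) be the number of permutations of {1,…,n} with up-down index k, and let τ_k = (−1)^{s(k)} where s(k) is the binary digit sum of k. If n is prime and n > ⌊log₂(2k)⌋ (with 0 ≤ k < 2^{n-1}), then U(n,k) ≡ τ_k (mod n). -/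
open Finset

namespace UTM


def D (E : Finset ℕ) : ℕ := ∑ e ∈ E, 2^e

lemma D_eq_zero_iff {E : Finset ℕ} : D E = 0 ↔ E = ∅ := by
  constructor
  · intro h
    by_contra hne
    obtain ⟨e, he⟩ := Finset.nonempty_iff_ne_empty.mpr hne
    have : 2^e ≤ D E := Finset.single_le_sum (fun i _ => Nat.zero_le _) he
    have : 0 < 2^e := Nat.pow_pos (by norm_num : 0 < 2)
    omega
  · rintro rfl; simp [D]

lemma D_decomp (E : Finset ℕ) :
    D E = (if 0 ∈ E then 1 else 0) + 2 * D ((E.erase 0).image (· - 1)) := by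
  have hinj : ∀ x ∈ E.erase 0, ∀ y ∈ E.erase 0, x - 1 = y - 1 → x = y := by
    intro x hx y hy h
    have hx0 := Finset.ne_of_mem_erase hx
    have hy0 := Finset.ne_of_mem_erase hy
    omega
  have h1 : D ((E.erase 0).image (· - 1)) = ∑ e ∈ E.erase 0, 2^(e-1) := by
    rw [D, Finset.sum_image hinj]
  have h2 : ∑ e ∈ E.erase 0, 2^e = 2 * ∑ e ∈ E.erase 0, 2^(e-1) := by
    rw [Finset.mul_sum]
    apply Finset.sum_congr rfl
    intro e he
    have he0 := Finset.ne_of_mem_erase he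
    rw [← pow_succ']
    congr 1
    omega
  by_cases h0 : 0 ∈ E
  · rw [h1, if_pos h0, ← h2]
    have := Finset.add_sum_erase E (fun e => 2^e) h0
    rw [D, ← this]
    simp
  · rw [h1, if_neg h0, ← h2, Finset.erase_eq_of_notMem h0, D]
    simp

lemma D_inj_aux : ∀ N, ∀ E F : Finset ℕ, D E ≤ N → D E = D F → E = F := by
  intro N
  induction N using Nat.strong_induction_on with
  | _ N ih =>
    intro E F hle h
    by_cases hE : D E = 0
    · rw [D_eq_zero_iff.mp hE, D_eq_zero_iff.mp (by omega : D F = 0)]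
    · have hdE := D_decomp E
      have hdF := D_decomp F
      have h0 : 0 ∈ E ↔ 0 ∈ F := by
        by_cases h0E : 0 ∈ E <;> by_cases h0F : 0 ∈ F <;>
          simp [h0E, h0F] at hdE hdF ⊢ <;> omega
      have hE' : D ((E.erase 0).image (· - 1)) = D ((F.erase 0).image (· - 1)) := by
        by_cases h0E : 0 ∈ E
        · rw [if_pos h0E] at hdE; rw [if_pos (h0.mp h0E)] at hdF; omega
        · rw [if_neg h0E] at hdE; rw [if_neg (fun hc => h0E (h0.mpr hc))] at hdF; omega
      have hlt : D ((E.erase 0).image (· - 1)) < N := by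
        split_ifs at hdE <;> omega
      have heq := ih _ hlt _ _ le_rfl hE'
      ext x
      by_cases hx : x = 0
      · subst hx; exact h0
      · constructor
        · intro hxE
          have : x - 1 ∈ (F.erase 0).image (· - 1) := heq ▸
            Finset.mem_image_of_mem _ (Finset.mem_erase.mpr ⟨hx, hxE⟩)
          obtain ⟨y, hy, hyx⟩ := Finset.mem_image.mp this
          have hy0 := Finset.ne_of_mem_erase hy
          have : y = x := by omega
          exact this ▸ Finset.mem_of_mem_erase hy
        · intro hxF
          have : x - 1 ∈ (E.erase 0).image (· - 1) := heq ▸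
            Finset.mem_image_of_mem _ (Finset.mem_erase.mpr ⟨hx, hxF⟩)
          obtain ⟨y, hy, hyx⟩ := Finset.mem_image.mp this
          have hy0 := Finset.ne_of_mem_erase hy
          have : y = x := by omega
          exact this ▸ Finset.mem_of_mem_erase hy

lemma D_inj : Function.Injective D := fun E F h => D_inj_aux (D E) E F le_rfl h

lemma digits_sum_D_aux : ∀ N, ∀ E : Finset ℕ, D E ≤ N → (Nat.digits 2 (D E)).sum = E.card := by
  intro N
  induction N using Nat.strong_induction_on with
  | _ N ih =>
    intro E hle
    by_cases hE : D E = 0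
    · rw [hE, D_eq_zero_iff.mp hE]; simp
    · have hdE := D_decomp E
      rw [Nat.digits_def' (by norm_num : 1 < 2) (Nat.pos_of_ne_zero hE)]
      have hmod : D E % 2 = if 0 ∈ E then 1 else 0 := by split_ifs at hdE ⊢ <;> omega
      have hdiv : D E / 2 = D ((E.erase 0).image (· - 1)) := by split_ifs at hdE <;> omega
      have hlt : D ((E.erase 0).image (· - 1)) < N := by split_ifs at hdE <;> omega
      rw [List.sum_cons, hmod, hdiv, ih _ hlt _ le_rfl]
      have hcard : ((E.erase 0).image (· - 1)).card = (E.erase 0).card := by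
        apply Finset.card_image_of_injOn
        intro x hx y hy h
        have hx0 := Finset.ne_of_mem_erase hx
        have hy0 := Finset.ne_of_mem_erase hy
        have h' : x - 1 = y - 1 := h
        omega
      rw [hcard]
      by_cases h0 : 0 ∈ E
      · rw [if_pos h0, Finset.card_erase_of_mem h0]
        have : 0 < E.card := Finset.card_pos.mpr ⟨0, h0⟩
        omega
      · rw [if_neg h0, Finset.erase_eq_of_notMem h0]; omega

lemma digits_sum_D (E : Finset ℕ) : (Nat.digits 2 (D E)).sum = E.card :=
  digits_sum_D_aux (D E) E le_rfl

lemma sum_range_two_pow (m : ℕ) : ∑ e ∈ range m, 2^e = 2^m - 1 := by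
  induction m with
  | zero => simp
  | succ k ihk =>
    rw [Finset.sum_range_succ, ihk]
    have : (1:ℕ) ≤ 2^k := Nat.one_le_two_pow
    ring_nf
    omega

lemma D_lt {m : ℕ} {E : Finset ℕ} (hE : E ⊆ range m) : D E < 2^m := by
  have h1 : D E ≤ D (range m) := Finset.sum_le_sum_of_subset hE
  have h2 : D (range m) = 2^m - 1 := by rw [D, sum_range_two_pow]
  have : (1:ℕ) ≤ 2^m := Nat.one_le_two_pow
  omega

lemma D_surj {m k : ℕ} (hk : k < 2^m) : ∃ E ⊆ range m, D E = k := by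
  have hsub : (range m).powerset.image D ⊆ range (2^m) := by
    intro x hx
    obtain ⟨E, hE, rfl⟩ := Finset.mem_image.mp hx
    exact Finset.mem_range.mpr (D_lt (Finset.mem_powerset.mp hE))
  have hcard : (range (2^m)).card ≤ ((range m).powerset.image D).card := by
    rw [Finset.card_image_of_injective _ D_inj, Finset.card_powerset, Finset.card_range,
      Finset.card_range]
  have := Finset.eq_of_subset_of_card_le hsub hcard
  have hk' : k ∈ (range m).powerset.image D := by rw [this]; exact Finset.mem_range.mpr hk
  obtain ⟨E, hE, hDE⟩ := Finset.mem_image.mp hk'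
  exact ⟨E, Finset.mem_powerset.mp hE, hDE⟩



def code {m : ℕ} (S : Finset (Fin m)) : ℕ := ∑ i ∈ S, 2^(m-1-i.val)

lemma revIdx_inj {m : ℕ} : Function.Injective (fun i : Fin m => m - 1 - i.val) := by
  intro i j h
  have hi := i.isLt
  have hj := j.isLt
  simp only at h
  exact Fin.ext (by omega)

lemma code_eq_D {m : ℕ} (S : Finset (Fin m)) :
    code S = D (S.image fun i => m - 1 - i.val) := by
  rw [D, Finset.sum_image (fun x _ y _ h => revIdx_inj h), code]

lemma code_image_subset {m : ℕ} (S : Finset (Fin m)) :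
    (S.image fun i => m - 1 - i.val) ⊆ range m := by
  intro x hx
  obtain ⟨i, _, rfl⟩ := Finset.mem_image.mp hx
  have := i.isLt
  exact Finset.mem_range.mpr (by omega)

lemma code_lt {m : ℕ} (S : Finset (Fin m)) : code S < 2^m :=
  code_eq_D S ▸ D_lt (code_image_subset S)

lemma code_inj {m : ℕ} : Function.Injective (code (m := m)) := by
  intro S S' h
  rw [code_eq_D, code_eq_D] at h
  have := D_inj h
  exact Finset.image_injective revIdx_inj this

lemma digits_sum_code {m : ℕ} (S : Finset (Fin m)) :
    (Nat.digits 2 (code S)).sum = S.card := by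
  rw [code_eq_D, digits_sum_D, Finset.card_image_of_injective _ revIdx_inj]

lemma code_surj {m k : ℕ} (hk : k < 2^m) : ∃ S : Finset (Fin m), code S = k := by
  obtain ⟨E, hE, hDE⟩ := D_surj hk
  refine ⟨univ.filter (fun i => m - 1 - i.val ∈ E), ?_⟩
  rw [code_eq_D, ← hDE]
  congr 1
  ext x
  simp only [Finset.mem_image, Finset.mem_filter, Finset.mem_univ, true_and]
  constructor
  · rintro ⟨i, hi, rfl⟩; exact hi
  · intro hx
    have hxm : x < m := Finset.mem_range.mp (hE hx)
    refine ⟨⟨m - 1 - x, by omega⟩, ?_, by simp; omega⟩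
    have : m - 1 - (m - 1 - x) = x := by omega
    simpa [this] using hx


def asc {m : ℕ} (π : Equiv.Perm (Fin (m+1))) : Finset (Fin m) :=
  univ.filter fun i => π i.castSucc < π i.succ


lemma updown_eq {m : ℕ} (π : Equiv.Perm (Fin (m+1))) :
    updownIndex (m+1) π = code (asc π) := by
  rw [code, asc, Finset.sum_filter, updownIndex]
  apply Finset.sum_congr rfl
  intro i _
  have h1 : (⟨i.val + 1, by have := i.isLt; omega⟩ : Fin (m+1)) = i.succ := rfl
  have h2 : (⟨i.val, by have := i.isLt; omega⟩ : Fin (m+1)) = i.castSucc := rfl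
  rw [h1, h2]
  rfl

def A (m : ℕ) (S : Finset (Fin m)) : ℕ :=
  #(univ.filter fun π : Equiv.Perm (Fin (m+1)) => asc π = S)

def F (m : ℕ) (T : Finset (Fin m)) : ℕ :=
  #(univ.filter fun π : Equiv.Perm (Fin (m+1)) => asc π ⊆ T)

lemma F_eq_sum (m : ℕ) (T : Finset (Fin m)) : F m T = ∑ S ∈ T.powerset, A m S := by
  rw [F]
  rw [Finset.card_eq_sum_card_fiberwise
    (f := fun π : Equiv.Perm (Fin (m+1)) => asc π) (t := T.powerset)
    (fun π hπ => Finset.mem_powerset.mpr (Finset.mem_filter.mp hπ).2)]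
  apply Finset.sum_congr rfl
  intro S hS
  rw [A, Finset.filter_filter]
  congr 1
  apply Finset.filter_congr
  intro π _
  constructor
  · rintro ⟨_, h⟩; exact h
  · rintro h; subst h; exact ⟨Finset.mem_powerset.mp hS, rfl⟩

lemma F_empty (m : ℕ) : F m ∅ = 1 := by
  rw [F, Finset.card_eq_one]
  refine ⟨Fin.revPerm, ?_⟩
  ext π
  simp only [Finset.mem_filter, Finset.mem_univ, true_and, Finset.mem_singleton]
  constructor
  · intro h
    have hdesc : ∀ i : Fin m, π i.succ < π i.castSucc := by
      intro i
      have : i ∉ asc π := fun hi => by simpa using h hi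
      simp only [asc, Finset.mem_filter, Finset.mem_univ, true_and, not_lt] at this
      exact lt_of_le_of_ne this (fun hc => (Fin.castSucc_lt_succ (i := i)).ne' (π.injective hc))
    have hmono : StrictMono (fun j => π (Fin.rev j)) := by
      rw [Fin.strictMono_iff_lt_succ]
      intro i
      have h1 : (Fin.rev i.castSucc) = (Fin.rev i).succ := by
        rw [Fin.rev_castSucc]
      have h2 : (Fin.rev i.succ) = (Fin.rev i).castSucc := by
        rw [Fin.rev_succ]
      simp only [h1, h2]
      exact hdesc (Fin.rev i)
    have : (fun j => π (Fin.rev j)) = id :=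
      (StrictMono.range_inj hmono strictMono_id).mp (by
        rw [Set.range_id]
        exact Set.range_eq_univ.mpr (fun y => ⟨Fin.rev (π.symm y), by simp⟩))
    apply Equiv.ext
    intro j
    have h3 := congrFun this (Fin.rev j)
    simpa using h3
  · rintro rfl
    intro i hi
    simp only [asc, Finset.mem_filter, Finset.mem_univ, true_and] at hi
    simp only [Fin.revPerm_apply] at hi
    rw [Fin.rev_castSucc, Fin.rev_succ] at hi
    exact absurd hi (lt_asymm (Fin.castSucc_lt_succ (i := i.rev)))
def bF {m : ℕ} (T : Finset (Fin m)) (i : Fin (m+1)) : Fin (m+1) :=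
  ⟨#(T.filter fun t => t.val < i.val), by
    have h1 := Finset.card_filter_le T (fun t => t.val < i.val)
    have h2 : #T ≤ m := by simpa using Finset.card_le_univ T
    omega⟩

lemma bF_mono {m : ℕ} (T : Finset (Fin m)) : Monotone (bF T) := by
  intro i j hij
  rw [Fin.le_def]
  show #(T.filter fun t => t.val < i.val) ≤ #(T.filter fun t => t.val < j.val)
  apply Finset.card_le_card
  intro t ht
  rw [Finset.mem_filter] at ht ⊢
  exact ⟨ht.1, lt_of_lt_of_le ht.2 (Fin.le_def.mp hij)⟩

lemma bF_succ {m : ℕ} (T : Finset (Fin m)) (i : Fin m) :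
    ((bF T i.succ : Fin (m+1)) : ℕ) = ((bF T i.castSucc : Fin (m+1)) : ℕ)
      + (if i ∈ T then 1 else 0) := by
  show #(T.filter fun t => t.val < i.succ.val) = #(T.filter fun t => t.val < i.castSucc.val) + _
  have hsplit : T.filter (fun t => t.val < i.succ.val)
      = T.filter (fun t => t.val < i.castSucc.val) ∪ T.filter (fun t => t = i) := by
    rw [← Finset.filter_or]
    apply Finset.filter_congr
    intro t _
    simp only [Fin.val_succ, Fin.coe_castSucc]
    constructor
    · intro h
      rcases Nat.lt_or_ge t.val i.val with h' | h'
      · exact Or.inl h'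
      · exact Or.inr (Fin.ext (by omega))
    · rintro (h | rfl)
      · omega
      · omega
  have hd : Disjoint (T.filter (fun t => t.val < i.castSucc.val)) (T.filter (fun t => t = i)) := by
    rw [Finset.disjoint_filter]
    rintro t _ ht rfl
    simp at ht
  rw [hsplit, Finset.card_union_of_disjoint hd, Finset.filter_eq']
  split_ifs with h <;> simp

lemma bF_eq_iff {m : ℕ} (T : Finset (Fin m)) (i : Fin m) :
    bF T i.castSucc = bF T i.succ ↔ i ∉ T := by
  rw [Fin.ext_iff]
  have := bF_succ T i
  split_ifs at this with h
  · constructor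
    · intro h'; omega
    · intro h'; exact absurd h h'
  · constructor
    · intro _; exact h
    · intro _; omega

lemma bF_zero {m : ℕ} (T : Finset (Fin m)) : ((bF T 0 : Fin (m+1)) : ℕ) = 0 := by
  show #(T.filter fun t => t.val < ((0 : Fin (m+1)):ℕ)) = 0
  simp

lemma bF_last {m : ℕ} (T : Finset (Fin m)) : ((bF T (Fin.last m) : Fin (m+1)) : ℕ) = #T := by
  show #(T.filter fun t => t.val < (Fin.last m : Fin (m+1)).val) = #T
  rw [Finset.filter_true_of_mem]
  intro t _
  simpa using t.isLt

def fib {m : ℕ} (f : Fin (m+1) → Fin (m+1)) (j : Fin (m+1)) : ℕ :=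
  #(univ.filter fun v => f v = j)

def Pcond {m : ℕ} (T : Finset (Fin m)) (h : Fin (m+1) → Fin (m+1)) : Prop :=
  ∀ j, fib h j = fib (bF T) j

instance {m : ℕ} (T : Finset (Fin m)) : DecidablePred (Pcond T) := fun _ => by
  unfold Pcond; infer_instance

lemma fib_comp_perm {m : ℕ} (f : Fin (m+1) → Fin (m+1)) (σ : Equiv.Perm (Fin (m+1)))
    (j : Fin (m+1)) : fib (f ∘ σ) j = fib f j := by
  apply Finset.card_bij' (fun v _ => σ v) (fun w _ => σ.symm w)
  · intro v hv; simp only [Finset.mem_filter, Finset.mem_univ, true_and] at hv ⊢; exact hv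
  · intro w hw; simp only [Finset.mem_filter, Finset.mem_univ, true_and,
      Function.comp_apply] at hw ⊢; simpa using hw
  · intro v _; simp
  · intro w _; simp

lemma monotone_fib_unique {m : ℕ} {f g : Fin (m+1) → Fin (m+1)} (hf : Monotone f)
    (hg : Monotone g) (hfib : ∀ j, fib f j = fib g j) : f = g := by
  have hcard : ∀ a, Fintype.card {i // f i ≤ a} = Fintype.card {i // g i ≤ a} := by
    intro a
    have key : ∀ u : Fin (m+1) → Fin (m+1),
        Fintype.card {i // u i ≤ a} = ∑ j ∈ Iic a, fib u j := by
      intro u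
      rw [Fintype.card_subtype]
      rw [Finset.card_eq_sum_card_fiberwise (f := u) (t := Iic a)
        (fun v hv => by simpa using (Finset.mem_filter.mp hv).2)]
      apply Finset.sum_congr rfl
      intro j hj
      rw [fib, Finset.filter_filter]
      congr 1
      apply Finset.filter_congr
      intro v _
      constructor
      · rintro ⟨_, h⟩; exact h
      · rintro rfl; exact ⟨by simpa using hj, rfl⟩
    rw [key f, key g]
    exact Finset.sum_congr rfl (fun j _ => hfib j)
  funext v
  apply le_antisymm
  · have h1 := (Tuple.lt_card_le_iff_apply_le_of_monotone (f := f) (a := g v) (j := v) hf)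
    rw [← Fintype.card_subtype] at h1
    rw [hcard (g v)] at h1
    exact h1.mp (by rw [Fintype.card_subtype]; exact (Tuple.lt_card_le_iff_apply_le_of_monotone (f := g) (a := g v) (j := v) hg).mpr le_rfl)
  · have h1 := (Tuple.lt_card_le_iff_apply_le_of_monotone (f := g) (a := f v) (j := v) hg)
    rw [← Fintype.card_subtype] at h1
    rw [← hcard (f v)] at h1
    exact h1.mp (by rw [Fintype.card_subtype]; exact (Tuple.lt_card_le_iff_apply_le_of_monotone (f := f) (a := f v) (j := v) hf).mpr le_rfl)

def key {m : ℕ} (h : Fin (m+1) → Fin (m+1)) (v : Fin (m+1)) :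
    (Fin (m+1)) ×ₗ (Fin (m+1))ᵒᵈ :=
  toLex (h v, OrderDual.toDual v)

lemma key_inj {m : ℕ} (h : Fin (m+1) → Fin (m+1)) : Function.Injective (key h) := by
  intro v w hvw
  have := congrArg (fun x => (ofLex x).2) hvw
  simpa [key] using this

lemma key_lt_iff {m : ℕ} (h : Fin (m+1) → Fin (m+1)) (v w : Fin (m+1)) :
    key h v < key h w ↔ h v < h w ∨ (h v = h w ∧ w < v) := by
  rw [key, key, Prod.Lex.lt_iff]
  simp

lemma key_strictMono_of_mem {m : ℕ} {T : Finset (Fin m)} {π : Equiv.Perm (Fin (m+1))}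
    (hπ : asc π ⊆ T) : StrictMono (fun i => key (bF T ∘ ⇑π⁻¹) (π i)) := by
  rw [Fin.strictMono_iff_lt_succ]
  intro i
  have hcs : (bF T ∘ ⇑π⁻¹) (π i.castSucc) = bF T i.castSucc := by simp
  have hs : (bF T ∘ ⇑π⁻¹) (π i.succ) = bF T i.succ := by simp
  rw [key_lt_iff, hcs, hs]
  have hle : bF T i.castSucc ≤ bF T i.succ := bF_mono T (Fin.castSucc_lt_succ (i := i)).le
  rcases eq_or_lt_of_le hle with heq | hlt
  · right
    refine ⟨heq, ?_⟩
    have hiT : i ∉ T := (bF_eq_iff T i).mp heq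
    have : i ∉ asc π := fun hc => hiT (hπ hc)
    simp only [asc, Finset.mem_filter, Finset.mem_univ, true_and, not_lt] at this
    exact lt_of_le_of_ne this (fun hc => (Fin.castSucc_lt_succ (i := i)).ne' (π.injective hc))
  · exact Or.inl hlt

lemma mem_unique {m : ℕ} {T : Finset (Fin m)} {π₁ π₂ : Equiv.Perm (Fin (m+1))}
    (h1 : asc π₁ ⊆ T) (h2 : asc π₂ ⊆ T)
    (he : bF T ∘ ⇑π₁⁻¹ = bF T ∘ ⇑π₂⁻¹) : π₁ = π₂ := by
  have s1 := key_strictMono_of_mem h1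
  have s2 := key_strictMono_of_mem h2
  rw [he] at s1
  have hr : Set.range (fun i => key (bF T ∘ ⇑π₂⁻¹) (π₁ i))
      = Set.range (fun i => key (bF T ∘ ⇑π₂⁻¹) (π₂ i)) := by
    show Set.range (key _ ∘ ⇑π₁) = Set.range (key _ ∘ ⇑π₂)
    rw [Function.Surjective.range_comp π₁.surjective, Function.Surjective.range_comp π₂.surjective]
  have := (StrictMono.range_inj s1 s2).mp hr
  apply Equiv.ext
  intro i
  exact key_inj _ (congrFun this i)

lemma exists_mem {m : ℕ} {T : Finset (Fin m)} {h : Fin (m+1) → Fin (m+1)} (hh : Pcond T h) :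
    ∃ π : Equiv.Perm (Fin (m+1)), asc π ⊆ T ∧ bF T ∘ ⇑π⁻¹ = h := by
  set σ := Tuple.sort (key h) with hσ
  have hmono : Monotone (key h ∘ ⇑σ) := Tuple.monotone_sort (key h)
  have hsm : StrictMono (key h ∘ ⇑σ) :=
    hmono.strictMono_of_injective ((key_inj h).comp σ.injective)
  have hfmono : Monotone (h ∘ ⇑σ) := by
    intro a b hab
    have hk := hmono hab
    rcases eq_or_lt_of_le hk with heq | hlt
    · exact le_of_eq (congrArg (fun x => (ofLex x).1) heq)
    · rw [Function.comp_apply, Function.comp_apply, key_lt_iff] at hlt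
      rcases hlt with h' | ⟨h', _⟩
      · exact h'.le
      · exact h'.le
  have hbf : h ∘ ⇑σ = bF T :=
    monotone_fib_unique hfmono (bF_mono T) (fun j => by rw [fib_comp_perm h σ j, hh j])
  refine ⟨σ, ?_, ?_⟩
  · intro i hi
    by_contra hiT
    have hasc : σ i.castSucc < σ i.succ := by
      simpa [asc] using (Finset.mem_filter.mp hi).2
    have h1 : h (σ i.castSucc) = bF T i.castSucc := congrFun hbf _
    have h2 : h (σ i.succ) = bF T i.succ := congrFun hbf _
    have heq : bF T i.castSucc = bF T i.succ := (bF_eq_iff T i).mpr hiT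
    have hlt := hsm (Fin.castSucc_lt_succ (i := i))
    rw [Function.comp_apply, Function.comp_apply, key_lt_iff, h1, h2, heq] at hlt
    rcases hlt with h' | ⟨_, h'⟩
    · exact lt_irrefl _ h'
    · exact lt_asymm hasc h'
  · funext v
    have := congrFun hbf (σ⁻¹ v)
    rw [Function.comp_apply, show σ (σ⁻¹ v) = v from σ.apply_symm_apply v] at this
    simp only [Function.comp_apply]
    rw [this]

def actInst {m : ℕ} (T : Finset (Fin m)) :
    MulAction (Multiplicative (Fin (m+1))) {h : Fin (m+1) → Fin (m+1) // Pcond T h} where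
  smul c y := ⟨fun v => y.1 (v + c.toAdd), by
    intro j
    rw [← y.2 j]
    exact fib_comp_perm y.1 (Equiv.addRight c.toAdd) j⟩
  one_smul y := Subtype.ext (funext fun v => by
    show y.1 (v + (1 : Multiplicative (Fin (m+1))).toAdd) = y.1 v
    simp)
  mul_smul c d y := Subtype.ext (funext fun v => by
    show y.1 (v + (c.toAdd + d.toAdd)) = y.1 (v + c.toAdd + d.toAdd)
    rw [add_assoc])

lemma dvd_F {m : ℕ} (hp : (m+1).Prime) {T : Finset (Fin m)} (hT : T ≠ ∅) :
    (m+1) ∣ F m T := by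
  have hcard : F m T = #(univ.filter fun h : Fin (m+1) → Fin (m+1) => Pcond T h) := by
    rw [F]
    apply Finset.card_bij (fun (π : Equiv.Perm (Fin (m+1))) _ => bF T ∘ ⇑π⁻¹)
    · intro π hπ
      simp only [Finset.mem_filter, Finset.mem_univ, true_and]
      intro j
      exact fib_comp_perm (bF T) π⁻¹ j
    · intro π₁ h₁ π₂ h₂ he
      exact mem_unique (by simpa using h₁) (by simpa using h₂) he
    · intro h hh
      obtain ⟨π, hπ, hbf⟩ := exists_mem (by simpa using hh : Pcond T h)
      exact ⟨π, by simpa using hπ, hbf⟩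
  rw [hcard, ← Fintype.card_subtype]
  haveI := Fact.mk hp
  letI := actInst T
  have hpg : IsPGroup (m+1) (Multiplicative (Fin (m+1))) :=
    IsPGroup.of_card (n := 1) (by rw [Nat.card_eq_fintype_card]; simp)
  have hmod := hpg.card_modEq_card_fixedPoints {h : Fin (m+1) → Fin (m+1) // Pcond T h}
  have hempty : ∀ y : {h : Fin (m+1) → Fin (m+1) // Pcond T h},
      y ∉ MulAction.fixedPoints (Multiplicative (Fin (m+1)))
        {h : Fin (m+1) → Fin (m+1) // Pcond T h} := by
    intro y hy
    have hconst : ∀ c : Fin (m+1), y.1 c = y.1 0 := by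
      intro c
      have h0 := MulAction.mem_fixedPoints.mp hy (Multiplicative.ofAdd c)
      have h1 : y.1 (0 + (Multiplicative.ofAdd c).toAdd) = y.1 0 :=
        congrFun (congrArg Subtype.val h0) 0
      simpa using h1
    set w := y.1 0 with hw
    have hfibzero : ∀ j, j ≠ w → fib y.1 j = 0 := by
      intro j hj
      rw [fib, Finset.card_eq_zero]
      apply Finset.filter_eq_empty_iff.mpr
      intro v _
      rw [hconst v]
      exact fun hc => hj hc.symm
    have hTpos : 0 < #T := Finset.card_pos.mpr (Finset.nonempty_iff_ne_empty.mpr hT)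
    have hne : bF T 0 ≠ bF T (Fin.last m) := by
      intro hc
      have := congrArg Fin.val hc
      rw [bF_zero, bF_last] at this
      omega
    have hfib1 : ∀ j, 0 < fib (bF T) (bF T j) := by
      intro j
      rw [fib, Finset.card_pos]
      exact ⟨j, by simp⟩
    rcases ne_or_eq (bF T 0) w with h' | h'
    · have := hfibzero _ h'
      rw [y.2] at this
      exact absurd this (by have := hfib1 0; omega)
    · have h'' : bF T (Fin.last m) ≠ w := fun hc => hne (h'.trans hc.symm)
      have := hfibzero _ h''
      rw [y.2] at this
      exact absurd this (by have := hfib1 (Fin.last m); omega)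
  have hfixcard : Nat.card (MulAction.fixedPoints (Multiplicative (Fin (m+1)))
      {h : Fin (m+1) → Fin (m+1) // Pcond T h}) = 0 := by
    haveI : IsEmpty (MulAction.fixedPoints (Multiplicative (Fin (m+1)))
        {h : Fin (m+1) → Fin (m+1) // Pcond T h}) := by
      rw [Set.isEmpty_coe_sort, Set.eq_empty_iff_forall_notMem]
      exact hempty
    exact Nat.card_of_isEmpty
  rw [hfixcard] at hmod
  rw [← Nat.card_eq_fintype_card]
  exact (Nat.modEq_zero_iff_dvd).mp hmod


lemma A_cast {m : ℕ} (hp : (m+1).Prime) (S : Finset (Fin m)) :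
    (A m S : ZMod (m+1)) = (-1) ^ S.card := by
  induction S using Finset.strongInduction with
  | _ S ih =>
    have h1 : ((F m S : ℕ) : ZMod (m+1)) = ∑ T ∈ S.powerset, (A m T : ZMod (m+1)) := by
      rw [F_eq_sum]; push_cast; rfl
    have h2 : ((F m S : ℕ) : ZMod (m+1)) = if S = ∅ then 1 else 0 := by
      by_cases hS : S = ∅
      · subst hS; rw [F_empty]; simp
      · rw [if_neg hS]
        exact (ZMod.natCast_eq_zero_iff _ _).mpr (dvd_F hp hS)
    have h3 : ∑ T ∈ S.powerset, ((-1 : ZMod (m+1))) ^ T.card = if S = ∅ then 1 else 0 := by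
      have h0 := Finset.sum_powerset_neg_one_pow_card (x := S)
      have h0' := congrArg (fun z : ℤ => (z : ZMod (m+1))) h0
      push_cast [apply_ite (fun z : ℤ => (z : ZMod (m+1)))] at h0'
      exact h0'
    have hSmem : S ∈ S.powerset := Finset.mem_powerset_self S
    rw [← Finset.add_sum_erase _ _ hSmem] at h1 h3
    have hsub : ∀ T ∈ S.powerset.erase S, (A m T : ZMod (m+1)) = (-1) ^ T.card := by
      intro T hT
      obtain ⟨hne, hTS⟩ := Finset.mem_erase.mp hT
      exact ih T (lt_of_le_of_ne (Finset.mem_powerset.mp hTS) hne)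
    rw [Finset.sum_congr rfl hsub] at h1
    have h5 : (A m S : ZMod (m+1)) + ∑ T ∈ S.powerset.erase S, ((-1 : ZMod (m+1))) ^ T.card
        = (-1) ^ S.card + ∑ T ∈ S.powerset.erase S, ((-1 : ZMod (m+1))) ^ T.card := by
      rw [← h1, h2, h3]
    exact add_right_cancel h5

end UTM

theorem U_thueMorse_congr (n k : ℕ) (hp : Nat.Prime n)
    (hn : Nat.log 2 (2 * k) < n) (hk : k < 2 ^ (n - 1)) :
    (U n k : ℤ) ≡ (-1 : ℤ) ^ (Nat.digits 2 k).sum [ZMOD (n : ℤ)] := by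
  rcases n with _ | m
  · exact absurd hp (by norm_num)
  rw [← ZMod.intCast_eq_intCast_iff]
  have hk' : k < 2 ^ m := hk
  obtain ⟨S, hS⟩ := UTM.code_surj hk'
  have hU : U (m+1) k = UTM.A m S := by
    unfold U UTM.A
    congr 1
    apply Finset.filter_congr
    intro π _
    rw [UTM.updown_eq, ← hS]
    constructor
    · exact fun h => UTM.code_inj h
    · exact fun h => h ▸ rfl
  rw [hU, ← hS, UTM.digits_sum_code]
  push_cast
  exact UTM.A_cast hp S
end
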